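/- Let α ∈ 𝔇^{(z)}_{σ₁,σ₂}(W) and v ∈ V^{(j₁,j₂)} with j₁, j₂ ∈ ℤ. Then for every n ∈ ℤ, x^{j₁/T}(x+z)^{n+j₂/T} Y_W^*(v, x+z)α ∈ 𝔇^{(z)}_{σ₁,σ₂}(W)[[x, x^{-1}]], i.e., every coefficient of this series is again an element of 𝔇^{(z)}_{σ₁,σ₂}(W). -/

import Mathlib

open scoped BigOperators

noncomputable section

/-- The generalized binomial coefficient `binom(a, n)` for `a : ℂ`, `n : ℕ`. -/
def cbinom (a : ℂ) (n : ℕ) : ℂ := (∏ i ∈ Finset.range n, (a - (i : ℂ))) / (n.factorial : ℂ)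

/-- The argument of a complex number normalized to lie in `[0, 2π)`. -/
def argB (ξ : ℂ) : ℝ := if 0 ≤ Complex.arg ξ then Complex.arg ξ else Complex.arg ξ + 2 * Real.pi

/-- The branch of the logarithm with `log ξ = ln |ξ| + i arg ξ`, `0 ≤ arg ξ < 2π`. -/
def logB (ξ : ℂ) : ℂ := (Real.log ‖ξ‖ : ℂ) + (argB ξ : ℂ) * Complex.I

/-- `ξ ^ α = e^{α log ξ}` with the chosen branch of `log`. -/
def bpow (ξ α : ℂ) : ℂ := Complex.exp (α * logB ξ)

/-- `e^{α π i}`. -/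
def epi (α : ℂ) : ℂ := Complex.exp (α * (Real.pi : ℂ) * Complex.I)

/-!  Formal series are recorded by the coefficient function `f : ℂ → ·`, where `f n` is the
coefficient of `x^{-n-1}`.  The following are the coefficients of the products with
`(x-z)^β`, `(z-x)^β`, `(x+z)^β`, `(z+x)^β` (with the expansion conventions
`(x ± ξ)^β = Σ_{j≥0} binom(β,j) (±ξ)^j x^{β-j}` and
`(ξ ± x)^β = Σ_{j≥0} binom(β,j) ξ^{β-j} (±x)^j`, where `ξ^γ` uses the chosen branch),
and of the substitution `f(x+z)`. -/

/-- Coefficient of `x^{-n-1}` in `(x-z)^β f(x)`. -/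
def mulXZ (z β : ℂ) (f : ℂ → ℂ) (n : ℂ) : ℂ :=
  ∑ᶠ i : ℕ, cbinom β i * (-z) ^ i * f (n + β - (i : ℂ))

/-- Coefficient of `x^{-n-1}` in `(z-x)^β f(x)`. -/
def mulZX (z β : ℂ) (f : ℂ → ℂ) (n : ℂ) : ℂ :=
  ∑ᶠ i : ℕ, cbinom β i * bpow z (β - (i : ℂ)) * (-1 : ℂ) ^ i * f (n + (i : ℂ))

/-- Coefficient of `x^{-n-1}` in `(x+z)^β f(x)`. -/
def mulXpZ (z β : ℂ) (f : ℂ → ℂ) (n : ℂ) : ℂ :=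
  ∑ᶠ i : ℕ, cbinom β i * z ^ i * f (n + β - (i : ℂ))

/-- Coefficient of `x^{-n-1}` in `(z+x)^β f(x)`. -/
def mulZpX (z β : ℂ) (f : ℂ → ℂ) (n : ℂ) : ℂ :=
  ∑ᶠ i : ℕ, cbinom β i * bpow z (β - (i : ℂ)) * f (n + (i : ℂ))

/-- Coefficient of `x^{-n-1}` in `f(x+z) = (e^{z d/dx} f)(x)`. -/
def substZ (z : ℂ) (f : ℂ → ℂ) (n : ℂ) : ℂ :=
  ∑ᶠ i : ℕ, cbinom ((i : ℂ) - n - 1) i * z ^ i * f (n - (i : ℂ))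

/-- A vertex algebra over `ℂ`, presented by its components `Y u n = u_n`, with the
Jacobi identity in (componentwise) Borcherds form. -/
structure VertexAlg (V : Type*) [AddCommGroup V] [Module ℂ V] where
  Y : V →ₗ[ℂ] ℤ → V →ₗ[ℂ] V
  one : V
  trunc : ∀ u v : V, ∃ N : ℤ, ∀ n : ℤ, N ≤ n → Y u n v = 0
  vacuum_eq : ∀ (n : ℤ) (v : V), Y one n v = if n = -1 then v else 0
  create : ∀ (u : V) (n : ℤ), 0 ≤ n → Y u n one = 0
  create' : ∀ u : V, Y u (-1) one = u
  jacobi : ∀ (u v w : V) (a b c : ℤ),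
    (∑ᶠ i : ℕ, ((-1 : ℂ) ^ i * cbinom (a : ℂ) i) •
      (Y u (a + b - (i : ℤ)) (Y v (c + (i : ℤ)) w)
        - ((-1 : ℂ) ^ a) • Y v (a + c - (i : ℤ)) (Y u (b + (i : ℤ)) w)))
    = ∑ᶠ i : ℕ, cbinom (b : ℂ) i • Y (Y u (a + (i : ℤ)) v) (b + c - (i : ℤ)) w

/-- An automorphism of a vertex algebra. -/
structure VAAut {V : Type*} [AddCommGroup V] [Module ℂ V] (A : VertexAlg V) where
  g : V ≃ₗ[ℂ] V
  map_one : g A.one = A.one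
  map_Y : ∀ (u : V) (n : ℤ) (v : V), g (A.Y u n v) = A.Y (g u) n (g v)

/-- `v` lies in the eigenspace `V^j = {v | σ v = e^{2πij/T} v}`. -/
def eig {V : Type*} [AddCommGroup V] [Module ℂ V] {A : VertexAlg V}
    (σ : VAAut A) (T : ℕ) (j : ℤ) (v : V) : Prop :=
  σ.g v = Complex.exp (2 * (Real.pi : ℂ) * Complex.I * (j : ℂ) / (T : ℂ)) • v

/-- A (weak) `σ`-twisted module for a vertex algebra, presented componentwise:
`Y v n` is the coefficient of `x^{-n-1}` in `Y_W(v,x)`; the `σ`-twisted Jacobi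
identity is stated coefficientwise. -/
structure TwistedModule {V : Type*} [AddCommGroup V] [Module ℂ V]
    (W : Type*) [AddCommGroup W] [Module ℂ W]
    (A : VertexAlg V) (σ : VAAut A) (T : ℕ) where
  Y : V →ₗ[ℂ] ℂ → W →ₗ[ℂ] W
  vacuum_eq : ∀ (n : ℂ) (w : W), Y A.one n w = if n = -1 then w else 0
  latt : ∀ (v : V) (n : ℂ), (∀ m : ℤ, n ≠ (m : ℂ) / (T : ℂ)) → Y v n = 0
  eig_supp : ∀ (j : ℤ) (v : V), eig σ T j v →
    ∀ n : ℂ, (∀ m : ℤ, n ≠ (j : ℂ) / (T : ℂ) + (m : ℂ)) → Y v n = 0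
  trunc : ∀ (v : V) (w : W), ∃ N : ℤ, ∀ m : ℤ, N ≤ m → Y v ((m : ℂ) / (T : ℂ)) w = 0
  jacobi : ∀ (j : ℤ) (u : V), eig σ T j u → ∀ (v : V) (w : W) (a b c : ℤ),
    (∑ᶠ i : ℕ, ((-1 : ℂ) ^ i * cbinom (a : ℂ) i) •
      (Y u ((a : ℂ) + (b : ℂ) / (T : ℂ) - (i : ℂ)) (Y v ((c : ℂ) / (T : ℂ) + (i : ℂ)) w)
        - ((-1 : ℂ) ^ a) •
          Y v ((a : ℂ) + (c : ℂ) / (T : ℂ) - (i : ℂ)) (Y u ((b : ℂ) / (T : ℂ) + (i : ℂ)) w)))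
    = if (T : ℤ) ∣ (b - j) then
        (∑ᶠ i : ℕ, cbinom ((b : ℂ) / (T : ℂ)) i •
          Y (A.Y u (a + (i : ℤ)) v) ((b : ℂ) / (T : ℂ) + (c : ℂ) / (T : ℂ) - (i : ℂ)) w)
      else 0

/-- A right `σ`-twisted module for a vertex algebra, presented componentwise
(opposite twisted Jacobi identity, coefficientwise). -/
structure RightTwistedModule {V : Type*} [AddCommGroup V] [Module ℂ V]
    (W : Type*) [AddCommGroup W] [Module ℂ W]
    (A : VertexAlg V) (σ : VAAut A) (T : ℕ) where
  Y : V →ₗ[ℂ] ℂ → W →ₗ[ℂ] W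
  vacuum_eq : ∀ (n : ℂ) (w : W), Y A.one n w = if n = -1 then w else 0
  latt : ∀ (v : V) (n : ℂ), (∀ m : ℤ, n ≠ (m : ℂ) / (T : ℂ)) → Y v n = 0
  trunc : ∀ (v : V) (w : W), ∃ N : ℤ, ∀ m : ℤ, m ≤ N → Y v ((m : ℂ) / (T : ℂ)) w = 0
  jacobi : ∀ (j : ℤ) (u : V), eig σ T j u → ∀ (v : V) (w : W) (a b c : ℤ),
    (∑ᶠ i : ℕ, ((-1 : ℂ) ^ i * cbinom (a : ℂ) i) •
      (Y v ((c : ℂ) / (T : ℂ) + (i : ℂ)) (Y u ((a : ℂ) + (b : ℂ) / (T : ℂ) - (i : ℂ)) w)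
        - ((-1 : ℂ) ^ a) •
          Y u ((b : ℂ) / (T : ℂ) + (i : ℂ)) (Y v ((a : ℂ) + (c : ℂ) / (T : ℂ) - (i : ℂ)) w)))
    = if (T : ℤ) ∣ (b + j) then
        (∑ᶠ i : ℕ, cbinom ((b : ℂ) / (T : ℂ)) i •
          Y (A.Y u (a + (i : ℤ)) v) ((b : ℂ) / (T : ℂ) + (c : ℂ) / (T : ℂ) - (i : ℂ)) w)
      else 0

section DualSetup

variable {V : Type*} [AddCommGroup V] [Module ℂ V] {W : Type*} [AddCommGroup W] [Module ℂ W]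
variable {A : VertexAlg V}

/-- The series `Y_W^*(v,x)α` paired with `w ∈ W`:  `m ↦ ⟨α, (Y_W v)_m w⟩`. -/
def Ydual (YW : V →ₗ[ℂ] ℂ → W →ₗ[ℂ] W) (v : V) (α : W → ℂ) (w : W) : ℂ → ℂ :=
  fun m => α (YW v m w)

/-- The condition `x^{j₂/T}(x-z)^{k+j₁/T} Y_W^*(v,x)α ∈ W^*((x))` (integer exponents and
lower truncation in `x`, uniformly in `w`). -/
def DCond (T : ℕ) (z : ℂ) (j₁ j₂ : ℤ) (YW : V →ₗ[ℂ] ℂ → W →ₗ[ℂ] W)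
    (v : V) (α : W → ℂ) (k : ℕ) : Prop :=
  (∀ n : ℂ, (∀ m : ℤ, n ≠ (m : ℂ)) → ∀ w : W,
    mulXZ z ((k : ℂ) + (j₁ : ℂ) / (T : ℂ)) (Ydual YW v α w) (n + (j₂ : ℂ) / (T : ℂ)) = 0) ∧
  (∃ N : ℤ, ∀ m : ℤ, N ≤ m → ∀ w : W,
    mulXZ z ((k : ℂ) + (j₁ : ℂ) / (T : ℂ)) (Ydual YW v α w) ((m : ℂ) + (j₂ : ℂ) / (T : ℂ)) = 0)

/-- The space `𝔇^{(z)}_{σ₁,σ₂}(W) ⊆ W^*`:  linear functionals `α` such that for every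
`v ∈ V^{(j₁,j₂)}` there is `k ∈ ℕ` with `x^{j₂/T}(x-z)^{k+j₁/T} Y_W^*(v,x)α ∈ W^*((x))`. -/
def Dspace (σ₁ σ₂ : VAAut A) (T : ℕ) (YW : V →ₗ[ℂ] ℂ → W →ₗ[ℂ] W) (z : ℂ) :
    Set (W → ℂ) :=
  { α | IsLinearMap ℂ α ∧ ∀ (j₁ j₂ : ℤ) (v : V), eig σ₁ T j₁ v → eig σ₂ T j₂ v →
      ∃ k : ℕ, DCond T z j₁ j₂ YW v α k }

/-- `YR` is the operation `Y_σ^R` on `𝔇^{(z)}_{σ₁,σ₂}(W)`:  it is linear in `v`, for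
`v ∈ V^{(j₁,j₂)}` and `α ∈ 𝔇` the series `Y_σ^R(v,x)α` has exponent support in
`x^{-j₂/T}(·)((x))`-form, and for every admissible `k ∈ ℕ`
`e^{(k+j₁/T)πi}(z-x)^{k+j₁/T} Y_σ^R(v,x)α = (x-z)^{k+j₁/T} Y_W^*(v,x)α`. -/
def IsYR (σ₁ σ₂ : VAAut A) (T : ℕ) (YW : V →ₗ[ℂ] ℂ → W →ₗ[ℂ] W) (z : ℂ)
    (YR : V → ℂ → (W → ℂ) → W → ℂ) : Prop :=
  (∀ (n : ℂ) (α : W → ℂ), IsLinearMap ℂ fun v => YR v n α) ∧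
  (∀ (j₁ j₂ : ℤ) (v : V), eig σ₁ T j₁ v → eig σ₂ T j₂ v →
    ∀ α ∈ Dspace σ₁ σ₂ T YW z,
      (∀ n : ℂ, (∀ m : ℤ, n ≠ (j₂ : ℂ) / (T : ℂ) + (m : ℂ)) → YR v n α = 0) ∧
      (∃ N : ℤ, ∀ m : ℤ, N ≤ m → YR v ((j₂ : ℂ) / (T : ℂ) + (m : ℂ)) α = 0) ∧
      (∀ k : ℕ, DCond T z j₁ j₂ YW v α k → ∀ (n : ℂ) (w : W),
        epi ((k : ℂ) + (j₁ : ℂ) / (T : ℂ)) *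
            mulZX z ((k : ℂ) + (j₁ : ℂ) / (T : ℂ)) (fun m => YR v m α w) n
          = mulXZ z ((k : ℂ) + (j₁ : ℂ) / (T : ℂ)) (Ydual YW v α w) n))

/-- The condition `x^{j₁/T}(x+z)^{l+j₂/T} Y_W^*(v,x+z)α ∈ W^*((x))`. -/
def LCond (T : ℕ) (z : ℂ) (j₁ j₂ : ℤ) (YW : V →ₗ[ℂ] ℂ → W →ₗ[ℂ] W)
    (v : V) (α : W → ℂ) (l : ℕ) : Prop :=
  (∀ n : ℂ, (∀ m : ℤ, n ≠ (m : ℂ)) → ∀ w : W,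
    mulXpZ z ((l : ℂ) + (j₂ : ℂ) / (T : ℂ)) (substZ z (Ydual YW v α w))
      (n + (j₁ : ℂ) / (T : ℂ)) = 0) ∧
  (∃ N : ℤ, ∀ m : ℤ, N ≤ m → ∀ w : W,
    mulXpZ z ((l : ℂ) + (j₂ : ℂ) / (T : ℂ)) (substZ z (Ydual YW v α w))
      ((m : ℂ) + (j₁ : ℂ) / (T : ℂ)) = 0)

/-- `YL` is the operation `Y_σ^L` on `𝔇^{(z)}_{σ₁,σ₂}(W)`:  linear in `v`, with exponent
support in `x^{-j₁/T}(·)((x))`-form, and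
`(z+x)^{l+j₂/T} Y_σ^L(v,x)α = (x+z)^{l+j₂/T} Y_W^*(v,x+z)α` for every admissible `l ∈ ℕ`. -/
def IsYL (σ₁ σ₂ : VAAut A) (T : ℕ) (YW : V →ₗ[ℂ] ℂ → W →ₗ[ℂ] W) (z : ℂ)
    (YL : V → ℂ → (W → ℂ) → W → ℂ) : Prop :=
  (∀ (n : ℂ) (α : W → ℂ), IsLinearMap ℂ fun v => YL v n α) ∧
  (∀ (j₁ j₂ : ℤ) (v : V), eig σ₁ T j₁ v → eig σ₂ T j₂ v →
    ∀ α ∈ Dspace σ₁ σ₂ T YW z,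
      (∀ n : ℂ, (∀ m : ℤ, n ≠ (j₁ : ℂ) / (T : ℂ) + (m : ℂ)) → YL v n α = 0) ∧
      (∃ N : ℤ, ∀ m : ℤ, N ≤ m → YL v ((j₁ : ℂ) / (T : ℂ) + (m : ℂ)) α = 0) ∧
      (∀ l : ℕ, LCond T z j₁ j₂ YW v α l → ∀ (n : ℂ) (w : W),
        mulZpX z ((l : ℂ) + (j₂ : ℂ) / (T : ℂ)) (fun m => YL v m α w) n
          = mulXpZ z ((l : ℂ) + (j₂ : ℂ) / (T : ℂ)) (substZ z (Ydual YW v α w)) n))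

end DualSetup

/-! ### Auxiliary lemmas -/

namespace VAaux

open Finset

/-! #### Generalized binomial coefficients -/

lemma cbinom_zero (a : ℂ) : cbinom a 0 = 1 := by simp [cbinom]

lemma cbinom_absorb (a : ℂ) (n : ℕ) :
    ((n : ℂ) + 1) * cbinom a (n + 1) = (a - n) * cbinom a n := by
  have h1 : (n.factorial : ℂ) ≠ 0 := Nat.cast_ne_zero.mpr n.factorial_ne_zero
  have h2 : ((n : ℂ) + 1) ≠ 0 := Nat.cast_add_one_ne_zero n
  unfold cbinom
  rw [Finset.prod_range_succ, Nat.factorial_succ]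
  push_cast
  field_simp

lemma cbinom_nat_lt {t a : ℕ} (h : t < a) : cbinom (t : ℂ) a = 0 := by
  unfold cbinom
  rw [Finset.prod_eq_zero (Finset.mem_range.mpr h) (by simp)]
  simp

lemma cbinom_zero_left {n : ℕ} (h : n ≠ 0) : cbinom (0 : ℂ) n = 0 := by
  have : (0 : ℕ) < n := Nat.pos_of_ne_zero h
  simpa using cbinom_nat_lt (t := 0) this

lemma cbinom_reflect (X : ℂ) (n : ℕ) :
    cbinom ((n : ℂ) - 1 - X) n = (-1) ^ n * cbinom X n := by
  unfold cbinom
  have h1 : ∏ i ∈ Finset.range n, ((n : ℂ) - 1 - X - i)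
      = ∏ j ∈ Finset.range n, ((j : ℂ) - X) := by
    rw [← Finset.prod_range_reflect (fun j => (j : ℂ) - X) n]
    refine Finset.prod_congr rfl fun i hi => ?_
    have hin : i < n := Finset.mem_range.mp hi
    have h2 : ((n - 1 - i : ℕ) : ℂ) = (n : ℂ) - 1 - i := by
      have h3 : n - 1 - i = n - (1 + i) := by omega
      have h4 : 1 + i ≤ n := by omega
      rw [h3, Nat.cast_sub h4]
      push_cast
      ring
    rw [h2]
    ring
  have h5 : ∏ j ∈ Finset.range n, ((j : ℂ) - X)
      = (-1) ^ n * ∏ j ∈ Finset.range n, (X - j) := by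
    rw [show ((-1 : ℂ)) ^ n = ∏ _j ∈ Finset.range n, (-1 : ℂ) by simp,
      ← Finset.prod_mul_distrib]
    exact Finset.prod_congr rfl fun j _ => by ring
  rw [h1, h5, mul_div_assoc]

lemma cbinom_pascal (X : ℂ) (n : ℕ) :
    cbinom (X + 1) (n + 1) = cbinom X (n + 1) + cbinom X n := by
  have h1 : (n.factorial : ℂ) ≠ 0 := Nat.cast_ne_zero.mpr n.factorial_ne_zero
  have h2 : ((n : ℂ) + 1) ≠ 0 := Nat.cast_add_one_ne_zero n
  unfold cbinom
  have hp : ∏ i ∈ Finset.range (n + 1), (X + 1 - i)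
      = (∏ i ∈ Finset.range n, (X - i)) * (X + 1) := by
    rw [Finset.prod_range_succ']
    congr 1
    refine Finset.prod_congr rfl fun i _ => ?_
    push_cast
    ring
    simp
  rw [hp, Finset.prod_range_succ, Nat.factorial_succ]
  push_cast
  field_simp
  ring

lemma cbinom_vandermonde (x y : ℂ) (ρ : ℕ) :
    ∑ t ∈ Finset.range (ρ + 1), cbinom x t * cbinom y (ρ - t) = cbinom (x + y) ρ := by
  induction ρ with
  | zero => simp [cbinom_zero]
  | succ ρ ih =>
    have hρ1 : ((ρ : ℂ) + 1) ≠ 0 := Nat.cast_add_one_ne_zero ρ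
    apply mul_left_cancel₀ hρ1
    have key : ((ρ : ℂ) + 1) * ∑ t ∈ Finset.range (ρ + 2), cbinom x t * cbinom y (ρ + 1 - t)
        = (x + y - ρ) * ∑ t ∈ Finset.range (ρ + 1), cbinom x t * cbinom y (ρ - t) := by
      rw [Finset.mul_sum]
      have hsplit : ∀ t ∈ Finset.range (ρ + 2),
          ((ρ : ℂ) + 1) * (cbinom x t * cbinom y (ρ + 1 - t))
            = (t : ℂ) * cbinom x t * cbinom y (ρ + 1 - t)
              + cbinom x t * (((ρ + 1 - t : ℕ) : ℂ) * cbinom y (ρ + 1 - t)) := by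
        intro t ht
        have h : t ≤ ρ + 1 := by
          have := Finset.mem_range.mp ht; omega
        have hc : ((ρ + 1 - t : ℕ) : ℂ) = (ρ : ℂ) + 1 - t := by
          rw [Nat.cast_sub h]; push_cast; ring
        rw [hc]; ring
      rw [Finset.sum_congr rfl hsplit, Finset.sum_add_distrib]
      have h1 : ∑ t ∈ Finset.range (ρ + 2), (t : ℂ) * cbinom x t * cbinom y (ρ + 1 - t)
          = ∑ t ∈ Finset.range (ρ + 1), (x - t) * (cbinom x t * cbinom y (ρ - t)) := by
        rw [Finset.sum_range_succ']
        simp only [Nat.cast_zero, zero_mul]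
        rw [add_zero]
        refine Finset.sum_congr rfl fun t _ => ?_
        have hh : ρ + 1 - (t + 1) = ρ - t := by omega
        rw [hh]
        have habs' := cbinom_absorb x t
        push_cast
        calc ((t : ℂ) + 1) * cbinom x (t + 1) * cbinom y (ρ - t)
            = (((t : ℂ) + 1) * cbinom x (t + 1)) * cbinom y (ρ - t) := by ring
          _ = ((x - t) * cbinom x t) * cbinom y (ρ - t) := by rw [habs']
          _ = (x - t) * (cbinom x t * cbinom y (ρ - t)) := by ring
      have h2 : ∑ t ∈ Finset.range (ρ + 2),
            cbinom x t * (((ρ + 1 - t : ℕ) : ℂ) * cbinom y (ρ + 1 - t))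
          = ∑ t ∈ Finset.range (ρ + 1),
              (y - ((ρ - t : ℕ) : ℂ)) * (cbinom x t * cbinom y (ρ - t)) := by
        rw [Finset.sum_range_succ]
        have hz : ρ + 1 - (ρ + 1) = 0 := by omega
        rw [hz]
        simp only [Nat.cast_zero, zero_mul, mul_zero, add_zero]
        refine Finset.sum_congr rfl fun t ht => ?_
        have htρ : t ≤ ρ := by have := Finset.mem_range.mp ht; omega
        have hh : ρ + 1 - t = (ρ - t) + 1 := by omega
        rw [hh]
        have habs' := cbinom_absorb y (ρ - t)
        push_cast
        calc cbinom x t * ((((ρ - t : ℕ) : ℂ) + 1) * cbinom y (ρ - t + 1))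
            = cbinom x t * (((((ρ - t : ℕ) : ℂ)) + 1) * cbinom y ((ρ - t) + 1)) := by norm_num
          _ = cbinom x t * ((y - ((ρ - t : ℕ) : ℂ)) * cbinom y (ρ - t)) := by rw [habs']
          _ = (y - ((ρ - t : ℕ) : ℂ)) * (cbinom x t * cbinom y (ρ - t)) := by ring
      rw [h1, h2, ← Finset.sum_add_distrib, Finset.mul_sum]
      refine Finset.sum_congr rfl fun t ht => ?_
      have htρ : t ≤ ρ := by have := Finset.mem_range.mp ht; omega
      have hc : ((ρ - t : ℕ) : ℂ) = (ρ : ℂ) - t := by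
        rw [Nat.cast_sub htρ]
      rw [hc]
      ring
    rw [key, ih]
    exact (cbinom_absorb (x + y) ρ).symm

lemma cbinom_subset (γ : ℂ) (a t : ℕ) (h : a ≤ t) :
    cbinom γ t * cbinom (t : ℂ) a = cbinom γ a * cbinom (γ - a) (t - a) := by
  have hfa : (a.factorial : ℂ) ≠ 0 := Nat.cast_ne_zero.mpr a.factorial_ne_zero
  have hft : (t.factorial : ℂ) ≠ 0 := Nat.cast_ne_zero.mpr t.factorial_ne_zero
  have hfta : ((t - a).factorial : ℂ) ≠ 0 := Nat.cast_ne_zero.mpr (t - a).factorial_ne_zero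
  unfold cbinom
  have hsplit : ∏ i ∈ Finset.range t, (γ - (i : ℂ))
      = (∏ i ∈ Finset.range a, (γ - (i : ℂ))) * ∏ i ∈ Finset.range (t - a), (γ - a - i) := by
    have hsp := Finset.prod_range_add (fun i => (γ - (i : ℂ))) a (t - a)
    rw [Nat.add_sub_cancel' h] at hsp
    rw [hsp]
    congr 1
    refine Finset.prod_congr rfl fun i _ => ?_
    push_cast
    ring
  have hdesc : ∏ i ∈ Finset.range a, ((t : ℂ) - i) = (t.descFactorial a : ℂ) := by
    rw [Nat.descFactorial_eq_prod_range, Nat.cast_prod]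
    refine Finset.prod_congr rfl fun i hi => ?_
    have : i ≤ t := by have := Finset.mem_range.mp hi; omega
    rw [Nat.cast_sub this]
  have hfac : ((t - a).factorial : ℂ) * (t.descFactorial a : ℂ) = (t.factorial : ℂ) := by
    exact_mod_cast congrArg (Nat.cast : ℕ → ℂ) (Nat.factorial_mul_descFactorial h)
  rw [hsplit, hdesc]
  field_simp
  rw [← hfac]
  ring

/-- per-`ρ` coefficient identity used to identify the substituted series. -/
lemma stepA_coeff (B C zz : ℂ) (ρ : ℕ) :
    ∑ i ∈ Finset.range (ρ + 1),
        (cbinom B i * zz ^ i) *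
          (cbinom (((ρ - i : ℕ) : ℂ) - (C - (i : ℂ)) - 1) (ρ - i) * zz ^ (ρ - i))
      = cbinom (C - B) ρ * (-zz) ^ ρ := by
  have h1 : ∀ i ∈ Finset.range (ρ + 1),
      (cbinom B i * zz ^ i) *
          (cbinom (((ρ - i : ℕ) : ℂ) - (C - (i : ℂ)) - 1) (ρ - i) * zz ^ (ρ - i))
        = (cbinom B i * cbinom ((ρ : ℂ) - 1 - C) (ρ - i)) * zz ^ ρ := by
    intro i hi
    have hiρ : i ≤ ρ := by have := Finset.mem_range.mp hi; omega
    have hc : ((ρ - i : ℕ) : ℂ) = (ρ : ℂ) - i := Nat.cast_sub hiρ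
    have harg : ((ρ - i : ℕ) : ℂ) - (C - (i : ℂ)) - 1 = (ρ : ℂ) - 1 - C := by
      rw [hc]; ring
    have hpow : zz ^ i * zz ^ (ρ - i) = zz ^ ρ := by
      rw [← pow_add, Nat.add_sub_cancel' hiρ]
    calc cbinom B i * zz ^ i *
          (cbinom (((ρ - i : ℕ) : ℂ) - (C - (i : ℂ)) - 1) (ρ - i) * zz ^ (ρ - i))
        = cbinom B i * cbinom (((ρ - i : ℕ) : ℂ) - (C - (i : ℂ)) - 1) (ρ - i) *
            (zz ^ i * zz ^ (ρ - i)) := by ring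
      _ = cbinom B i * cbinom ((ρ : ℂ) - 1 - C) (ρ - i) * zz ^ ρ := by rw [harg, hpow]
  rw [Finset.sum_congr rfl h1, ← Finset.sum_mul, cbinom_vandermonde]
  have h2 : B + ((ρ : ℂ) - 1 - C) = (ρ : ℂ) - 1 - (C - B) := by ring
  rw [h2, cbinom_reflect]
  rw [neg_pow]
  ring

/-! #### finsum and Finset helpers -/

lemma finsum_eq_sum_range {M' : Type*} [AddCommMonoid M'] (f : ℕ → M') (B : ℕ) (h : ∀ t, B ≤ t → f t = 0) :
    ∑ᶠ t, f t = ∑ t ∈ Finset.range B, f t := by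
  apply finsum_eq_sum_of_support_subset
  intro t ht
  simp only [Finset.coe_range, Set.mem_Iio]
  by_contra hc
  exact ht (h t (by omega))

lemma diagRect (F : ℕ → ℕ → ℂ) (h : ℕ → ℂ) (B Bt Br : ℕ) (hBt : B ≤ Bt) (hBr : B ≤ Br)
    (hh : ∀ ρ, B ≤ ρ → h ρ = 0) :
    ∑ t ∈ Finset.range Bt, ∑ r ∈ Finset.range Br, F t r * h (t + r)
      = ∑ ρ ∈ Finset.range B, (∑ e ∈ Finset.range (ρ + 1), F e (ρ - e)) * h ρ := by
  have hshrink1 : ∑ t ∈ Finset.range Bt, ∑ r ∈ Finset.range Br, F t r * h (t + r)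
      = ∑ t ∈ Finset.range B, ∑ r ∈ Finset.range Br, F t r * h (t + r) := by
    refine (Finset.sum_subset (Finset.range_subset_range.mpr hBt) fun t _ ht => ?_).symm
    have htB : B ≤ t := by
      by_contra hc
      exact ht (Finset.mem_range.mpr (by omega))
    refine Finset.sum_eq_zero fun r _ => ?_
    rw [hh (t + r) (by omega), mul_zero]
  have hshrink2 : ∀ t ∈ Finset.range B,
      ∑ r ∈ Finset.range Br, F t r * h (t + r)
        = ∑ r ∈ Finset.range (B - t), F t r * h (t + r) := by
    intro t ht
    have htB : t < B := Finset.mem_range.mp ht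
    refine (Finset.sum_subset (Finset.range_subset_range.mpr (by omega)) fun r _ hr => ?_).symm
    have : B - t ≤ r := by
      by_contra hc
      exact hr (Finset.mem_range.mpr (by omega))
    rw [hh (t + r) (by omega), mul_zero]
  rw [hshrink1, Finset.sum_congr rfl hshrink2]
  simp only [Finset.sum_mul]
  rw [Finset.sum_sigma' (Finset.range B) (fun t => Finset.range (B - t))
      (fun t r => F t r * h (t + r)),
    Finset.sum_sigma' (Finset.range B) (fun ρ => Finset.range (ρ + 1))
      (fun ρ e => F e (ρ - e) * h ρ)]
  refine Finset.sum_nbij' (i := fun p => ⟨p.1 + p.2, p.1⟩) (j := fun p => ⟨p.2, p.1 - p.2⟩)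
    ?_ ?_ ?_ ?_ ?_
  · rintro ⟨t, r⟩ hp
    simp only [Finset.mem_sigma, Finset.mem_range] at hp ⊢
    omega
  · rintro ⟨ρ, e⟩ hp
    simp only [Finset.mem_sigma, Finset.mem_range] at hp ⊢
    omega
  · rintro ⟨t, r⟩ hp
    simp only [Finset.mem_sigma, Finset.mem_range] at hp
    simp only [Sigma.mk.inj_iff, Nat.add_sub_cancel_left, heq_eq_eq]
  · rintro ⟨ρ, e⟩ hp
    simp only [Finset.mem_sigma, Finset.mem_range] at hp
    simp only [Sigma.mk.inj_iff, heq_eq_eq]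
    constructor
    · omega
    · trivial
  · rintro ⟨t, r⟩ hp
    simp only [Finset.mem_sigma, Finset.mem_range] at hp
    simp only [Nat.add_sub_cancel_left]

/-! #### mulXZ / substitution lemmas -/

lemma mulXZ_eq_sum (z γ ν : ℂ) (f : ℂ → ℂ) (B : ℕ)
    (hf : ∀ t : ℕ, B ≤ t → f (ν + γ - t) = 0) :
    mulXZ z γ f ν = ∑ t ∈ Finset.range B, cbinom γ t * (-z) ^ t * f (ν + γ - t) :=
  finsum_eq_sum_range _ B (fun t ht => by rw [hf t ht, mul_zero])

lemma mulXpZ_eq_sum (z β n : ℂ) (f : ℂ → ℂ) (B : ℕ)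
    (hf : ∀ t : ℕ, B ≤ t → f (n + β - t) = 0) :
    mulXpZ z β f n = ∑ t ∈ Finset.range B, cbinom β t * z ^ t * f (n + β - t) :=
  finsum_eq_sum_range _ B (fun t ht => by rw [hf t ht, mul_zero])

lemma mulXZ_succ (z γ ν : ℂ) (f : ℂ → ℂ) (B : ℕ)
    (hf : ∀ ρ : ℕ, B ≤ ρ → f (ν + γ + 1 - ρ) = 0) :
    mulXZ z (γ + 1) f ν = mulXZ z γ f (ν + 1) - z * mulXZ z γ f ν := by
  have harg1 : ∀ t : ℕ, ν + (γ + 1) - (t : ℂ) = ν + γ + 1 - t := fun t => by ring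
  have harg2 : ∀ t : ℕ, (ν + 1) + γ - (t : ℂ) = ν + γ + 1 - t := fun t => by ring
  have e1 : mulXZ z (γ + 1) f ν
      = ∑ t ∈ Finset.range (B + 2), cbinom (γ + 1) t * (-z) ^ t * f (ν + γ + 1 - t) := by
    rw [mulXZ_eq_sum z (γ + 1) ν f (B + 2) (fun t ht => by
      rw [harg1 t]; exact hf t (by omega))]
    exact Finset.sum_congr rfl fun t _ => by rw [harg1 t]
  have e2 : mulXZ z γ f (ν + 1)
      = ∑ t ∈ Finset.range (B + 2), cbinom γ t * (-z) ^ t * f (ν + γ + 1 - t) := by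
    rw [mulXZ_eq_sum z γ (ν + 1) f (B + 2) (fun t ht => by
      rw [harg2 t]; exact hf t (by omega))]
    exact Finset.sum_congr rfl fun t _ => by rw [harg2 t]
  have e3 : z * mulXZ z γ f ν
      = - ∑ t ∈ Finset.range (B + 2),
          (if t = 0 then 0 else cbinom γ (t - 1) * (-z) ^ t * f (ν + γ + 1 - t)) := by
    rw [mulXZ_eq_sum z γ ν f (B + 1) (fun t ht => by
      have : ν + γ - (t : ℂ) = ν + γ + 1 - ((t + 1 : ℕ) : ℂ) := by push_cast; ring
      rw [this]; exact hf (t + 1) (by omega))]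
    rw [Finset.sum_range_succ' (fun t => if t = 0 then 0
      else cbinom γ (t - 1) * (-z) ^ t * f (ν + γ + 1 - t)) (B + 1)]
    simp only [Nat.succ_ne_zero, Nat.add_sub_cancel, if_false, if_true, ite_true, ite_false,
      add_zero]
    rw [Finset.mul_sum, ← Finset.sum_neg_distrib]
    refine Finset.sum_congr rfl fun t _ => ?_
    have : ν + γ + 1 - ((t + 1 : ℕ) : ℂ) = ν + γ - t := by push_cast; ring
    rw [this]
    ring
  rw [e1, e2, e3, sub_neg_eq_add, ← Finset.sum_add_distrib]
  refine Finset.sum_congr rfl fun t _ => ?_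
  match t with
  | 0 => simp [cbinom_zero]
  | (s + 1) =>
    rw [if_neg (Nat.succ_ne_zero s), Nat.add_sub_cancel, cbinom_pascal]
    ring

lemma upshift {W : Type*} (z γ δ : ℂ) (f : W → ℂ → ℂ)
    (hLT : ∀ (w : W) (C : ℂ), ∃ B : ℕ, ∀ ρ : ℕ, B ≤ ρ → f w (C - ρ) = 0)
    (N : ℤ) (h : ∀ m : ℤ, N ≤ m → ∀ w, mulXZ z γ (f w) ((m : ℂ) + δ) = 0) (d : ℕ) :
    ∀ m : ℤ, N ≤ m → ∀ w, mulXZ z (γ + (d : ℂ)) (f w) ((m : ℂ) + δ) = 0 := by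
  induction d with
  | zero => simpa using h
  | succ d ih =>
    intro m hm w
    obtain ⟨B, hB⟩ := hLT w (((m : ℂ) + δ) + (γ + (d : ℂ)) + 1)
    have hstep := mulXZ_succ z (γ + (d : ℂ)) ((m : ℂ) + δ) (f w) B (fun ρ hρ => hB ρ hρ)
    have hcast : γ + ((d + 1 : ℕ) : ℂ) = (γ + (d : ℂ)) + 1 := by push_cast; ring
    have hm1 : ((m : ℂ) + δ) + 1 = ((m + 1 : ℤ) : ℂ) + δ := by push_cast; ring
    rw [hcast, hstep, hm1, ih (m + 1) (by omega) w, ih m hm w, mul_zero, sub_zero]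

/-- substituted-and-shifted series identity:
`x^{j₁/T} (x+z)^{n+j₂/T} Y^*(v,x+z)α` has the same coefficients as the
`(x-z)`-form with complex exponent. -/
lemma stepA (z μ ν : ℂ) (f : ℂ → ℂ) (B : ℕ)
    (hf : ∀ ρ : ℕ, B ≤ ρ → f (ν + μ - ρ) = 0) :
    mulXpZ z ν (substZ z f) μ = mulXZ z μ f ν := by
  have hargg : ∀ i t : ℕ, (μ + ν - (i : ℂ)) - (t : ℂ) = ν + μ - ((i + t : ℕ) : ℂ) := by
    intro i t; push_cast; ring
  have hsub : ∀ i : ℕ, substZ z f (μ + ν - i)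
      = ∑ t ∈ Finset.range B,
          cbinom ((t : ℂ) - (μ + ν - (i : ℂ)) - 1) t * z ^ t * f ((μ + ν - (i : ℂ)) - t) := by
    intro i
    apply finsum_eq_sum_range
    intro t ht
    rw [hargg i t, hf (i + t) (by omega), mul_zero]
  have houter : mulXpZ z ν (substZ z f) μ
      = ∑ i ∈ Finset.range B, cbinom ν i * z ^ i * substZ z f (μ + ν - i) := by
    apply finsum_eq_sum_range
    intro i hi
    have : substZ z f (μ + ν - i) = 0 := by
      rw [hsub i]
      refine Finset.sum_eq_zero fun t _ => ?_
      rw [hargg i t, hf (i + t) (by omega), mul_zero]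
    rw [this, mul_zero]
  rw [houter]
  have hmain : ∑ i ∈ Finset.range B, cbinom ν i * z ^ i * substZ z f (μ + ν - i)
      = ∑ i ∈ Finset.range B, ∑ t ∈ Finset.range B,
          ((cbinom ν i * z ^ i) * (cbinom ((t : ℂ) - (μ + ν - (i : ℂ)) - 1) t * z ^ t))
            * f (ν + μ - ((i + t : ℕ) : ℂ)) := by
    refine Finset.sum_congr rfl fun i _ => ?_
    rw [hsub i, Finset.mul_sum]
    refine Finset.sum_congr rfl fun t _ => ?_
    rw [hargg i t]
    ring
  rw [hmain]
  rw [diagRect (fun i t => (cbinom ν i * z ^ i) * (cbinom ((t : ℂ) - (μ + ν - (i : ℂ)) - 1) t * z ^ t))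
    (fun ρ => f (ν + μ - (ρ : ℂ))) B B B le_rfl le_rfl (fun ρ hρ => hf ρ hρ)]
  rw [mulXZ_eq_sum z μ ν f B hf]
  refine Finset.sum_congr rfl fun ρ _ => ?_
  have hco := stepA_coeff ν (μ + ν) z ρ
  have harg2 : μ + ν - ν = μ := by ring
  calc (∑ e ∈ Finset.range (ρ + 1),
        (cbinom ν e * z ^ e) * (cbinom (((ρ - e : ℕ) : ℂ) - (μ + ν - (e : ℂ)) - 1) (ρ - e) * z ^ (ρ - e)))
        * f (ν + μ - (ρ : ℂ))
      = (cbinom (μ + ν - ν) ρ * (-z) ^ ρ) * f (ν + μ - (ρ : ℂ)) := by rw [hco]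
    _ = cbinom μ ρ * (-z) ^ ρ * f (ν + μ - (ρ : ℂ)) := by rw [harg2]


lemma vander_sum (x y zz : ℂ) (ρ : ℕ) :
    ∑ e ∈ Finset.range (ρ + 1), (cbinom x e * zz ^ e) * (cbinom y (ρ - e) * zz ^ (ρ - e))
      = cbinom (x + y) ρ * zz ^ ρ := by
  have h1 : ∀ e ∈ Finset.range (ρ + 1),
      (cbinom x e * zz ^ e) * (cbinom y (ρ - e) * zz ^ (ρ - e))
        = (cbinom x e * cbinom y (ρ - e)) * zz ^ ρ := by
    intro e he
    have heρ : e ≤ ρ := by have := Finset.mem_range.mp he; omega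
    have hpow : zz ^ e * zz ^ (ρ - e) = zz ^ ρ := by
      rw [← pow_add, Nat.add_sub_cancel' heρ]
    calc (cbinom x e * zz ^ e) * (cbinom y (ρ - e) * zz ^ (ρ - e))
        = (cbinom x e * cbinom y (ρ - e)) * (zz ^ e * zz ^ (ρ - e)) := by ring
      _ = (cbinom x e * cbinom y (ρ - e)) * zz ^ ρ := by rw [hpow]
  rw [Finset.sum_congr rfl h1, ← Finset.sum_mul, cbinom_vandermonde]

lemma kernel_expand (γS Cu : ℂ) (ι t : ℕ) :
    cbinom γS t * cbinom (Cu - t) ι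
      = ∑ a ∈ Finset.range (ι + 1),
          ((-1 : ℂ) ^ ι * cbinom ((ι : ℂ) - 1 - Cu) (ι - a) * cbinom γS a) *
            (if a ≤ t then cbinom (γS - a) (t - a) else 0) := by
  have hrefl := cbinom_reflect (Cu - (t : ℂ)) ι
  have h1 : cbinom (Cu - (t : ℂ)) ι = (-1 : ℂ) ^ ι * cbinom ((t : ℂ) + ((ι : ℂ) - 1 - Cu)) ι := by
    have harg : (ι : ℂ) - 1 - (Cu - (t : ℂ)) = (t : ℂ) + ((ι : ℂ) - 1 - Cu) := by ring
    rw [harg] at hrefl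
    have h2 : ((-1 : ℂ) ^ ι) * ((-1 : ℂ) ^ ι) = 1 := by
      rw [← mul_pow]; norm_num
    calc cbinom (Cu - (t : ℂ)) ι
        = (((-1 : ℂ) ^ ι) * ((-1 : ℂ) ^ ι)) * cbinom (Cu - (t : ℂ)) ι := by rw [h2, one_mul]
      _ = ((-1 : ℂ) ^ ι) * (((-1 : ℂ) ^ ι) * cbinom (Cu - (t : ℂ)) ι) := by ring
      _ = ((-1 : ℂ) ^ ι) * cbinom ((t : ℂ) + ((ι : ℂ) - 1 - Cu)) ι := by rw [← hrefl]
  rw [h1, ← cbinom_vandermonde ((t : ℂ)) ((ι : ℂ) - 1 - Cu) ι, Finset.mul_sum, Finset.mul_sum]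
  refine Finset.sum_congr rfl fun a _ => ?_
  by_cases hat : a ≤ t
  · rw [if_pos hat]
    have hsub := cbinom_subset γS a t hat
    calc cbinom γS t * ((-1 : ℂ) ^ ι * (cbinom (t : ℂ) a * cbinom ((ι : ℂ) - 1 - Cu) (ι - a)))
        = (-1 : ℂ) ^ ι * cbinom ((ι : ℂ) - 1 - Cu) (ι - a) * (cbinom γS t * cbinom (t : ℂ) a) := by
          ring
      _ = _ := by rw [hsub]; ring
  · rw [if_neg hat, cbinom_nat_lt (by omega), mul_zero]
    ring


/-- The `Ξ`-part of the main computation:  the iterate (product-vector) terms vanish,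
given the (upshifted) `DCond` instances for the product vector. -/
lemma xi_vanish (z γS μS Cu Cv : ℂ) (ι : ℕ) (h : ℂ → ℂ) (Bt Br BH : ℕ)
    (hh : ∀ ρ : ℕ, BH ≤ ρ → h (Cu + Cv - (ι : ℂ) - ρ) = 0)
    (hBt : BH + ι ≤ Bt) (hBr : BH ≤ Br)
    (hDa : ∀ a : ℕ, a ≤ ι →
      mulXZ z (γS + μS - (a : ℂ)) h ((Cu + Cv - (ι : ℂ) - (a : ℂ)) - (γS + μS - (a : ℂ))) = 0) :
    ∑ t ∈ Finset.range Bt, ∑ r ∈ Finset.range Br,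
        (cbinom γS t * (-z) ^ t) *
          ((cbinom μS r * (-z) ^ r) *
            (cbinom (Cu - (t : ℂ)) ι * h ((Cu - (t : ℂ)) + (Cv - (r : ℂ)) - ι))) = 0 := by
  have hstep1 : ∀ t r : ℕ,
      (cbinom γS t * (-z) ^ t) *
          ((cbinom μS r * (-z) ^ r) *
            (cbinom (Cu - (t : ℂ)) ι * h ((Cu - (t : ℂ)) + (Cv - (r : ℂ)) - ι)))
        = ∑ a ∈ Finset.range (ι + 1),
            ((-1 : ℂ) ^ ι * cbinom ((ι : ℂ) - 1 - Cu) (ι - a) * cbinom γS a) *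
              ((if a ≤ t then cbinom (γS - a) (t - a) else 0) * (-z) ^ t *
                ((cbinom μS r * (-z) ^ r) * h ((Cu - (t : ℂ)) + (Cv - (r : ℂ)) - ι))) := by
    intro t r
    rw [show (cbinom γS t * (-z) ^ t) *
          ((cbinom μS r * (-z) ^ r) *
            (cbinom (Cu - (t : ℂ)) ι * h ((Cu - (t : ℂ)) + (Cv - (r : ℂ)) - ι)))
        = (cbinom γS t * cbinom (Cu - (t : ℂ)) ι) *
            ((-z) ^ t * ((cbinom μS r * (-z) ^ r) * h ((Cu - (t : ℂ)) + (Cv - (r : ℂ)) - ι)))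
      from by ring]
    rw [kernel_expand γS Cu ι t, Finset.sum_mul]
    refine Finset.sum_congr rfl fun a _ => ?_
    ring
  calc ∑ t ∈ Finset.range Bt, ∑ r ∈ Finset.range Br,
        (cbinom γS t * (-z) ^ t) *
          ((cbinom μS r * (-z) ^ r) *
            (cbinom (Cu - (t : ℂ)) ι * h ((Cu - (t : ℂ)) + (Cv - (r : ℂ)) - ι)))
      = ∑ t ∈ Finset.range Bt, ∑ a ∈ Finset.range (ι + 1), ∑ r ∈ Finset.range Br,
          ((-1 : ℂ) ^ ι * cbinom ((ι : ℂ) - 1 - Cu) (ι - a) * cbinom γS a) *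
            ((if a ≤ t then cbinom (γS - a) (t - a) else 0) * (-z) ^ t *
              ((cbinom μS r * (-z) ^ r) * h ((Cu - (t : ℂ)) + (Cv - (r : ℂ)) - ι))) := by
        refine Finset.sum_congr rfl fun t _ => ?_
        rw [← Finset.sum_comm]
        exact Finset.sum_congr rfl fun r _ => hstep1 t r
    _ = ∑ a ∈ Finset.range (ι + 1), ∑ t ∈ Finset.range Bt, ∑ r ∈ Finset.range Br,
          ((-1 : ℂ) ^ ι * cbinom ((ι : ℂ) - 1 - Cu) (ι - a) * cbinom γS a) *
            ((if a ≤ t then cbinom (γS - a) (t - a) else 0) * (-z) ^ t *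
              ((cbinom μS r * (-z) ^ r) * h ((Cu - (t : ℂ)) + (Cv - (r : ℂ)) - ι))) :=
        Finset.sum_comm
    _ = 0 := by
        refine Finset.sum_eq_zero fun a ha => ?_
        have haι : a ≤ ι := by have := Finset.mem_range.mp ha; omega
        have hpull : ∑ t ∈ Finset.range Bt, ∑ r ∈ Finset.range Br,
            ((-1 : ℂ) ^ ι * cbinom ((ι : ℂ) - 1 - Cu) (ι - a) * cbinom γS a) *
              ((if a ≤ t then cbinom (γS - a) (t - a) else 0) * (-z) ^ t *
                ((cbinom μS r * (-z) ^ r) * h ((Cu - (t : ℂ)) + (Cv - (r : ℂ)) - ι)))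
            = ((-1 : ℂ) ^ ι * cbinom ((ι : ℂ) - 1 - Cu) (ι - a) * cbinom γS a) *
              ∑ t ∈ Finset.range Bt, ∑ r ∈ Finset.range Br,
                ((if a ≤ t then cbinom (γS - a) (t - a) else 0) * (-z) ^ t *
                  ((cbinom μS r * (-z) ^ r) * h ((Cu - (t : ℂ)) + (Cv - (r : ℂ)) - ι))) := by
          rw [Finset.mul_sum]
          exact Finset.sum_congr rfl fun t _ => by rw [Finset.mul_sum]
        rw [hpull]
        have hinner : ∑ t ∈ Finset.range Bt, ∑ r ∈ Finset.range Br,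
            ((if a ≤ t then cbinom (γS - a) (t - a) else 0) * (-z) ^ t *
              ((cbinom μS r * (-z) ^ r) * h ((Cu - (t : ℂ)) + (Cv - (r : ℂ)) - ι))) = 0 := by
          have haBt : a ≤ Bt := by omega
          rw [Finset.range_eq_Ico,
            ← Finset.sum_Ico_consecutive _ (Nat.zero_le a) haBt]
          simp only [← Finset.range_eq_Ico]
          have hlow : ∑ t ∈ Finset.range a, ∑ r ∈ Finset.range Br,
              ((if a ≤ t then cbinom (γS - a) (t - a) else 0) * (-z) ^ t *
                ((cbinom μS r * (-z) ^ r) * h ((Cu - (t : ℂ)) + (Cv - (r : ℂ)) - ι))) = 0 := by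
            refine Finset.sum_eq_zero fun t ht => Finset.sum_eq_zero fun r _ => ?_
            have : ¬ a ≤ t := by
              have := Finset.mem_range.mp ht; omega
            rw [if_neg this, zero_mul, zero_mul]
          rw [hlow, zero_add, Finset.sum_Ico_eq_sum_range]
          have hre : ∀ i ∈ Finset.range (Bt - a), ∀ r ∈ Finset.range Br,
              ((if a ≤ a + i then cbinom (γS - a) (a + i - a) else 0) * (-z) ^ (a + i) *
                ((cbinom μS r * (-z) ^ r) * h ((Cu - ((a + i : ℕ) : ℂ)) + (Cv - (r : ℂ)) - ι)))
              = (-z) ^ a * (((cbinom (γS - a) i * (-z) ^ i) * (cbinom μS r * (-z) ^ r)) *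
                  h ((Cu + Cv - (ι : ℂ) - (a : ℂ)) - ((i + r : ℕ) : ℂ))) := by
            intro i _ r _
            rw [if_pos (Nat.le_add_right a i), Nat.add_sub_cancel_left, pow_add]
            have harg : (Cu - ((a + i : ℕ) : ℂ)) + (Cv - (r : ℂ)) - ι
                = (Cu + Cv - (ι : ℂ) - (a : ℂ)) - ((i + r : ℕ) : ℂ) := by
              push_cast; ring
            rw [harg]
            ring
          rw [Finset.sum_congr rfl fun i hi => Finset.sum_congr rfl fun r hr => hre i hi r hr]
          have hpull2 : ∑ i ∈ Finset.range (Bt - a), ∑ r ∈ Finset.range Br,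
              (-z) ^ a * (((cbinom (γS - a) i * (-z) ^ i) * (cbinom μS r * (-z) ^ r)) *
                h ((Cu + Cv - (ι : ℂ) - (a : ℂ)) - ((i + r : ℕ) : ℂ)))
              = (-z) ^ a * ∑ i ∈ Finset.range (Bt - a), ∑ r ∈ Finset.range Br,
                  (((cbinom (γS - a) i * (-z) ^ i) * (cbinom μS r * (-z) ^ r)) *
                    h ((Cu + Cv - (ι : ℂ) - (a : ℂ)) - ((i + r : ℕ) : ℂ))) := by
            rw [Finset.mul_sum]
            exact Finset.sum_congr rfl fun i _ => by rw [Finset.mul_sum]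
          rw [hpull2]
          have hdiag := diagRect
            (fun i r => (cbinom (γS - a) i * (-z) ^ i) * (cbinom μS r * (-z) ^ r))
            (fun ρ => h ((Cu + Cv - (ι : ℂ) - (a : ℂ)) - (ρ : ℂ))) BH (Bt - a) Br
            (by omega) hBr
            (fun ρ hρ => by
              show h ((Cu + Cv - (ι : ℂ) - (a : ℂ)) - (ρ : ℂ)) = 0
              have harg : (Cu + Cv - (ι : ℂ) - (a : ℂ)) - (ρ : ℂ)
                  = Cu + Cv - (ι : ℂ) - ((a + ρ : ℕ) : ℂ) := by push_cast; ring
              rw [harg]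
              exact hh (a + ρ) (by omega))
          rw [hdiag]
          have hvan : ∀ ρ ∈ Finset.range BH,
              (∑ e ∈ Finset.range (ρ + 1),
                (cbinom (γS - a) e * (-z) ^ e) * (cbinom μS (ρ - e) * (-z) ^ (ρ - e))) *
                h ((Cu + Cv - (ι : ℂ) - (a : ℂ)) - (ρ : ℂ))
              = cbinom (γS + μS - (a : ℂ)) ρ * (-z) ^ ρ *
                  h (((Cu + Cv - (ι : ℂ) - (a : ℂ)) - (γS + μS - (a : ℂ)))
                    + (γS + μS - (a : ℂ)) - (ρ : ℂ)) := by
            intro ρ _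
            rw [vander_sum (γS - a) μS (-z) ρ]
            have h1 : γS - (a : ℂ) + μS = γS + μS - (a : ℂ) := by ring
            have h2 : (Cu + Cv - (ι : ℂ) - (a : ℂ)) - (ρ : ℂ)
                = ((Cu + Cv - (ι : ℂ) - (a : ℂ)) - (γS + μS - (a : ℂ)))
                    + (γS + μS - (a : ℂ)) - (ρ : ℂ) := by ring
            rw [h1, h2]
            try ring
          rw [Finset.sum_congr rfl hvan]
          have hmz := VAaux.mulXZ_eq_sum z (γS + μS - (a : ℂ))
            ((Cu + Cv - (ι : ℂ) - (a : ℂ)) - (γS + μS - (a : ℂ))) h BH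
            (fun t' ht' => by
              have harg : ((Cu + Cv - (ι : ℂ) - (a : ℂ)) - (γS + μS - (a : ℂ)))
                  + (γS + μS - (a : ℂ)) - (t' : ℂ)
                  = Cu + Cv - (ι : ℂ) - ((a + t' : ℕ) : ℂ) := by push_cast; ring
              rw [harg]
              exact hh (a + t') (by omega))
          rw [← hmz, hDa a haι, mul_zero]
        rw [hinner, mul_zero]


/-! #### Module-side lemmas -/

section Module

variable {V : Type*} [AddCommGroup V] [Module ℂ V] {W : Type*} [AddCommGroup W] [Module ℂ W]
variable {A : VertexAlg V} {σ : VAAut A} {T : ℕ}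

lemma ltruncY (hT : 0 < T) (M : RightTwistedModule W A σ T) (y : V) (w : W) (C : ℂ) :
    ∃ B : ℕ, ∀ t : ℕ, B ≤ t → M.Y y (C - t) w = 0 := by
  have hT0 : (T : ℂ) ≠ 0 := Nat.cast_ne_zero.mpr hT.ne'
  by_cases hl : ∃ m : ℤ, C = (m : ℂ) / T
  · obtain ⟨m, hm⟩ := hl
    obtain ⟨N, hN⟩ := M.trunc y w
    refine ⟨(m - N).toNat, fun t ht => ?_⟩
    have h2 : (m - N : ℤ) ≤ t := le_trans (Int.self_le_toNat _) (by exact_mod_cast ht)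
    have h3 : (t : ℤ) ≤ t * T := le_mul_of_one_le_right (Int.ofNat_nonneg t) (by exact_mod_cast hT)
    have h1 : (m - t * T : ℤ) ≤ N := by omega
    have harg : C - t = (((m - t * T : ℤ) : ℂ)) / T := by
      rw [hm]
      push_cast
      field_simp
    rw [harg]
    exact hN _ h1
  · refine ⟨0, fun t _ => ?_⟩
    have hl2 : ∀ m : ℤ, C - t ≠ (m : ℂ) / T := by
      intro m hmeq
      apply hl
      refine ⟨m + t * T, ?_⟩
      have : C = (m : ℂ) / T + t := by
        rw [← hmeq]; ring
      rw [this]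
      push_cast
      field_simp
    rw [M.latt y (C - t) hl2]
    rfl

lemma sl (hT : 0 < T) (M : RightTwistedModule W A σ T)
    (j : ℤ) (y : V) (hy : eig σ T j y) (s : ℂ)
    (hs : ∀ mh : ℤ, s ≠ -(j : ℂ) / (T : ℂ) + mh) : M.Y y s = 0 := by
  have hT0 : (T : ℂ) ≠ 0 := Nat.cast_ne_zero.mpr hT.ne'
  by_cases hl : ∀ m : ℤ, s ≠ (m : ℂ) / (T : ℂ)
  · exact M.latt y s hl
  push_neg at hl
  obtain ⟨m, hm⟩ := hl
  have hnd : ¬ (T : ℤ) ∣ (m + T) + j := by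
    rintro ⟨q, hq⟩
    apply hs (q - 1)
    rw [hm]
    have h2 : (m : ℤ) = T * q - T - j := by omega
    have h3 : (m : ℂ) = (T : ℂ) * (q : ℂ) - T - j := by exact_mod_cast h2
    rw [h3]
    field_simp
    push_cast
    ring
  ext w
  have hj := M.jacobi j y hy A.one w (-1) (m + T) (-(T : ℤ))
  rw [if_neg hnd] at hj
  have hcT : (((-(T : ℤ)) : ℤ) : ℂ) / (T : ℂ) = -1 := by
    push_cast
    field_simp
  have hz : ∀ i : ℕ, i ≠ 0 →
      ((-1 : ℂ) ^ i * cbinom (((-1 : ℤ)) : ℂ) i) •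
        (M.Y A.one ((((-(T : ℤ)) : ℤ) : ℂ) / (T : ℂ) + (i : ℂ))
            (M.Y y ((((-1 : ℤ)) : ℂ) + (((m + T : ℤ)) : ℂ) / (T : ℂ) - (i : ℂ)) w)
          - ((-1 : ℂ) ^ (-1 : ℤ)) •
            M.Y y ((((m + T : ℤ)) : ℂ) / (T : ℂ) + (i : ℂ))
              (M.Y A.one ((((-1 : ℤ)) : ℂ) + (((-(T : ℤ)) : ℤ) : ℂ) / (T : ℂ) - (i : ℂ)) w)) = 0 := by
    intro i hi
    have hv1 : M.Y A.one ((((-(T : ℤ)) : ℤ) : ℂ) / (T : ℂ) + (i : ℂ))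
        (M.Y y ((((-1 : ℤ)) : ℂ) + (((m + T : ℤ)) : ℂ) / (T : ℂ) - (i : ℂ)) w) = 0 := by
      rw [M.vacuum_eq, if_neg]
      rw [hcT]
      intro hc
      apply hi
      have : (i : ℂ) = 0 := by linear_combination hc
      exact_mod_cast this
    have hv2 : M.Y A.one ((((-1 : ℤ)) : ℂ) + (((-(T : ℤ)) : ℤ) : ℂ) / (T : ℂ) - (i : ℂ)) w = 0 := by
      rw [M.vacuum_eq, if_neg]
      rw [hcT]
      intro hc
      have : ((i : ℕ) : ℂ) + 1 = 0 := by push_cast at hc ⊢; linear_combination -hc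
      have h4 : (((i + 1 : ℕ)) : ℂ) = 0 := by push_cast; linear_combination this
      exact Nat.succ_ne_zero i (by exact_mod_cast h4)
    rw [hv1, hv2]
    simp
  rw [finsum_eq_single _ 0 hz] at hj
  have hv2' : M.Y A.one ((((-1 : ℤ)) : ℂ) + (((-(T : ℤ)) : ℤ) : ℂ) / (T : ℂ) - ((0 : ℕ) : ℂ)) w = 0 := by
    rw [M.vacuum_eq, if_neg]
    rw [hcT]
    intro hc
    norm_num at hc
  rw [hv2', map_zero, smul_zero, sub_zero] at hj
  simp only [pow_zero, cbinom_zero, mul_one, one_smul] at hj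
  have hv3 : M.Y A.one ((((-(T : ℤ)) : ℤ) : ℂ) / (T : ℂ) + ((0 : ℕ) : ℂ))
      (M.Y y ((((-1 : ℤ)) : ℂ) + (((m + T : ℤ)) : ℂ) / (T : ℂ) - ((0 : ℕ) : ℂ)) w)
      = M.Y y ((((-1 : ℤ)) : ℂ) + (((m + T : ℤ)) : ℂ) / (T : ℂ) - ((0 : ℕ) : ℂ)) w := by
    rw [M.vacuum_eq, if_pos]
    rw [hcT]
    norm_num
  rw [hv3] at hj
  have harg : (((-1 : ℤ)) : ℂ) + (((m + T : ℤ)) : ℂ) / (T : ℂ) - ((0 : ℕ) : ℂ) = s := by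
    rw [hm]
    push_cast
    field_simp
    try ring
  rw [harg] at hj
  simpa using hj

lemma comm_formula (hT : 0 < T) (M : RightTwistedModule W A σ T)
    (ju : ℤ) (y : V) (hy : eig σ T ju y) (v' : V) (K₀ : ℕ)
    (hK : ∀ ι : ℕ, K₀ ≤ ι → A.Y y ((ι : ℤ)) v' = 0)
    (b c : ℤ) (hb : (T : ℤ) ∣ b + ju) (w : W) :
    M.Y v' ((c : ℂ) / (T : ℂ)) (M.Y y ((b : ℂ) / (T : ℂ)) w)
      = M.Y y ((b : ℂ) / (T : ℂ)) (M.Y v' ((c : ℂ) / (T : ℂ)) w)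
        + ∑ ι ∈ Finset.range K₀, cbinom ((b : ℂ) / (T : ℂ)) ι •
            M.Y (A.Y y ((ι : ℤ)) v') ((b : ℂ) / (T : ℂ) + (c : ℂ) / (T : ℂ) - (ι : ℂ)) w := by
  have hj := M.jacobi ju y hy v' w 0 b c
  rw [if_pos hb] at hj
  have hz : ∀ i : ℕ, i ≠ 0 →
      ((-1 : ℂ) ^ i * cbinom (((0 : ℤ)) : ℂ) i) •
        (M.Y v' (((c : ℤ) : ℂ) / (T : ℂ) + (i : ℂ))
            (M.Y y ((((0 : ℤ)) : ℂ) + ((b : ℤ) : ℂ) / (T : ℂ) - (i : ℂ)) w)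
          - ((-1 : ℂ) ^ (0 : ℤ)) •
            M.Y y (((b : ℤ) : ℂ) / (T : ℂ) + (i : ℂ))
              (M.Y v' ((((0 : ℤ)) : ℂ) + ((c : ℤ) : ℂ) / (T : ℂ) - (i : ℂ)) w)) = 0 := by
    intro i hi
    have hc : cbinom (((0 : ℤ)) : ℂ) i = 0 := by
      rw [Int.cast_zero]
      exact cbinom_zero_left hi
    rw [hc, mul_zero, zero_smul]
  rw [finsum_eq_single _ 0 hz] at hj
  simp only [Int.cast_zero, zero_add, zpow_zero, one_smul, pow_zero, cbinom_zero, one_mul,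
    Nat.cast_zero, add_zero, sub_zero] at hj
  have hv : ∀ t : ℕ, K₀ ≤ t → cbinom ((b : ℂ) / (T : ℂ)) t •
      M.Y (A.Y y ((t : ℤ)) v') ((b : ℂ) / (T : ℂ) + (c : ℂ) / (T : ℂ) - (t : ℂ)) w = 0 := by
    intro t ht
    rw [hK t ht, map_zero]
    simp
  have hR := finsum_eq_sum_range (fun t : ℕ => cbinom ((b : ℂ) / (T : ℂ)) t •
    M.Y (A.Y y ((t : ℤ)) v') ((b : ℂ) / (T : ℂ) + (c : ℂ) / (T : ℂ) - (t : ℂ)) w) K₀ hv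
  rw [hR] at hj
  -- hj : lhs - rhs1 = rhs2
  have := sub_eq_iff_eq_add.mp hj
  rw [this, add_comm]

lemma eig_prod {σ' : VAAut A} (j j' : ℤ) (u' v' : V)
    (hu : eig σ' T j' u') (hv : eig σ' T j v') (r : ℤ) :
    eig σ' T (j + j') (A.Y u' r v') := by
  unfold eig at *
  rw [σ'.map_Y, hu, hv]
  simp only [map_smul, Pi.smul_apply, LinearMap.smul_apply, smul_smul]
  congr 1
  rw [← Complex.exp_add]
  congr 1
  push_cast
  ring

lemma eig_sigma {σ₁ σ₂ : VAAut A} {σ : VAAut A}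
    (hσ : ∀ v : V, σ.g (σ₁.g (σ₂.g v)) = v)
    (j₁ j₂ : ℤ) (v : V) (hv₁ : eig σ₁ T j₁ v) (hv₂ : eig σ₂ T j₂ v) :
    eig σ T (-(j₁ + j₂)) v := by
  unfold eig at *
  have h := hσ v
  rw [hv₂] at h
  simp only [map_smul] at h
  rw [hv₁] at h
  simp only [map_smul, smul_smul] at h
  set c : ℂ := Complex.exp (2 * (Real.pi : ℂ) * Complex.I * ((j₂ : ℂ)) / (T : ℂ)) *
    Complex.exp (2 * (Real.pi : ℂ) * Complex.I * ((j₁ : ℂ)) / (T : ℂ)) with hcdef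
  have hc0 : c ≠ 0 := mul_ne_zero (Complex.exp_ne_zero _) (Complex.exp_ne_zero _)
  have h2 : σ.g v = c⁻¹ • v := by
    rw [eq_inv_smul_iff₀ hc0]
    exact h
  rw [h2]
  congr 1
  rw [hcdef, ← Complex.exp_add, ← Complex.exp_neg]
  congr 1
  push_cast
  ring

end Module

end VAaux
/-- Proposition 3.10.  For `α ∈ 𝔇^{(z)}_{σ₁,σ₂}(W)` and
`v ∈ V^{(j₁,j₂)}`, for every `n ∈ ℤ` all coefficients of the series
`x^{j₁/T}(x+z)^{n+j₂/T} Y_W^*(v, x+z) α` again lie in `𝔇^{(z)}_{σ₁,σ₂}(W)`. -/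
theorem shifted_series_coeff_mem_Dspace
    (V : Type*) [AddCommGroup V] [Module ℂ V] (W : Type*) [AddCommGroup W] [Module ℂ W]
    (A : VertexAlg V) (σ₁ σ₂ σ : VAAut A) (T : ℕ) (hT : 0 < T)
    (hσ₁ : ∀ v : V, (⇑σ₁.g)^[T] v = v) (hσ₂ : ∀ v : V, (⇑σ₂.g)^[T] v = v)
    (hcommAut : ∀ v : V, σ₁.g (σ₂.g v) = σ₂.g (σ₁.g v))
    (hσ : ∀ v : V, σ.g (σ₁.g (σ₂.g v)) = v)
    (z : ℂ) (hz : z ≠ 0)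
    (M : RightTwistedModule W A σ T)
    (α : W → ℂ) (hα : α ∈ Dspace σ₁ σ₂ T M.Y z)
    (j₁ j₂ : ℤ) (v : V) (hv₁ : eig σ₁ T j₁ v) (hv₂ : eig σ₂ T j₂ v) :
    ∀ (n : ℤ) (m : ℂ),
      (fun w => mulXpZ z ((n : ℂ) + (j₂ : ℂ) / (T : ℂ)) (substZ z (Ydual M.Y v α w))
          (m + (j₁ : ℂ) / (T : ℂ)))
        ∈ Dspace σ₁ σ₂ T M.Y z := by
  classical
  intro n m
  have hT0 : (T : ℂ) ≠ 0 := Nat.cast_ne_zero.mpr hT.ne'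
  obtain ⟨hlin, hD⟩ := hα
  have hα0 : α 0 = 0 := hlin.map_zero
  have hvσ : eig σ T (-(j₁ + j₂)) v := VAaux.eig_sigma hσ j₁ j₂ v hv₁ hv₂
  have hLT : ∀ (y : V) (w : W) (C : ℂ), ∃ B : ℕ, ∀ ρ : ℕ, B ≤ ρ →
      Ydual M.Y y α w (C - ρ) = 0 := by
    intro y w C
    obtain ⟨B, hB⟩ := VAaux.ltruncY hT M y w C
    refine ⟨B, fun ρ hρ => ?_⟩
    show α (M.Y y (C - ρ) w) = 0
    rw [hB ρ hρ, hα0]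
  have hrw : (fun w => mulXpZ z ((n : ℂ) + (j₂ : ℂ) / (T : ℂ)) (substZ z (Ydual M.Y v α w))
        (m + (j₁ : ℂ) / (T : ℂ)))
      = fun w => mulXZ z (m + (j₁ : ℂ) / (T : ℂ)) (Ydual M.Y v α w)
          ((n : ℂ) + (j₂ : ℂ) / (T : ℂ)) := by
    funext w
    obtain ⟨B, hB⟩ := hLT v w (((n : ℂ) + (j₂ : ℂ) / (T : ℂ)) + (m + (j₁ : ℂ) / (T : ℂ)))
    exact VAaux.stepA z _ _ _ B hB
  rw [hrw]
  set μ' : ℂ := m + (j₁ : ℂ) / (T : ℂ) with hμdef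
  set ν' : ℂ := (n : ℂ) + (j₂ : ℂ) / (T : ℂ) with hνdef
  show (fun w => mulXZ z μ' (Ydual M.Y v α w) ν') ∈ Dspace σ₁ σ₂ T M.Y z
  set β' : W → ℂ := fun w => mulXZ z μ' (Ydual M.Y v α w) ν' with hβdef
  have hβ'w : ∀ w : W, β' w = mulXZ z μ' (Ydual M.Y v α w) ν' := fun w => rfl
  have hβ'0 : β' 0 = 0 := by
    rw [hβ'w, VAaux.mulXZ_eq_sum z μ' ν' _ 0 (fun t _ => by
      show α (M.Y v (ν' + μ' - t) 0) = 0
      rw [map_zero, hα0])]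
    simp
  constructor
  · refine ⟨fun w₁ w₂ => ?_, fun c w => ?_⟩
    · obtain ⟨B1, h1⟩ := hLT v w₁ (ν' + μ')
      obtain ⟨B2, h2⟩ := hLT v w₂ (ν' + μ')
      have h12 : ∀ ρ : ℕ, max B1 B2 ≤ ρ → Ydual M.Y v α (w₁ + w₂) (ν' + μ' - ρ) = 0 := by
        intro ρ hρ
        show α (M.Y v (ν' + μ' - ρ) (w₁ + w₂)) = 0
        rw [map_add, hlin.map_add]
        have e1 : α (M.Y v (ν' + μ' - ρ) w₁) = 0 := h1 ρ (le_trans (le_max_left _ _) hρ)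
        have e2 : α (M.Y v (ν' + μ' - ρ) w₂) = 0 := h2 ρ (le_trans (le_max_right _ _) hρ)
        rw [e1, e2, add_zero]
      show mulXZ z μ' (Ydual M.Y v α (w₁ + w₂)) ν'
          = mulXZ z μ' (Ydual M.Y v α w₁) ν' + mulXZ z μ' (Ydual M.Y v α w₂) ν'
      rw [VAaux.mulXZ_eq_sum z μ' ν' _ (max B1 B2) h12,
        VAaux.mulXZ_eq_sum z μ' ν' _ (max B1 B2)
          (fun ρ hρ => h1 ρ (le_trans (le_max_left _ _) hρ)),
        VAaux.mulXZ_eq_sum z μ' ν' _ (max B1 B2)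
          (fun ρ hρ => h2 ρ (le_trans (le_max_right _ _) hρ)),
        ← Finset.sum_add_distrib]
      refine Finset.sum_congr rfl fun t _ => ?_
      show cbinom μ' t * (-z) ^ t * α (M.Y v (ν' + μ' - t) (w₁ + w₂))
          = cbinom μ' t * (-z) ^ t * α (M.Y v (ν' + μ' - t) w₁)
            + cbinom μ' t * (-z) ^ t * α (M.Y v (ν' + μ' - t) w₂)
      rw [map_add, hlin.map_add]
      ring
    · obtain ⟨B1, h1⟩ := hLT v w (ν' + μ')
      have hc : ∀ ρ : ℕ, B1 ≤ ρ → Ydual M.Y v α (c • w) (ν' + μ' - ρ) = 0 := by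
        intro ρ hρ
        show α (M.Y v (ν' + μ' - ρ) (c • w)) = 0
        have e1 : α (M.Y v (ν' + μ' - ρ) w) = 0 := h1 ρ hρ
        rw [map_smul, hlin.map_smul, e1, smul_zero]
      show mulXZ z μ' (Ydual M.Y v α (c • w)) ν' = c • mulXZ z μ' (Ydual M.Y v α w) ν'
      rw [VAaux.mulXZ_eq_sum z μ' ν' _ B1 hc, VAaux.mulXZ_eq_sum z μ' ν' _ B1 h1, smul_eq_mul,
        Finset.mul_sum]
      refine Finset.sum_congr rfl fun t _ => ?_
      show cbinom μ' t * (-z) ^ t * α (M.Y v (ν' + μ' - t) (c • w))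
          = c * (cbinom μ' t * (-z) ^ t * α (M.Y v (ν' + μ' - t) w))
      rw [map_smul, hlin.map_smul, smul_eq_mul]
      ring
  intro j₁' j₂' u hu₁ hu₂
  have huσ : eig σ T (-(j₁' + j₂')) u := VAaux.eig_sigma hσ j₁' j₂' u hu₁ hu₂
  by_cases hm : ∃ m₀ : ℤ, m = (m₀ : ℂ)
  case neg =>
    have hβz : ∀ w'' : W, β' w'' = 0 := by
      intro w''
      rw [hβ'w, VAaux.mulXZ_eq_sum z μ' ν' _ 0 ?_]
      · simp
      intro t _
      show α (M.Y v (ν' + μ' - t) w'') = 0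
      have hYz : M.Y v (ν' + μ' - t) = 0 := by
        apply VAaux.sl hT M (-(j₁ + j₂)) v hvσ
        intro mh heq
        apply hm
        refine ⟨mh - n + t, ?_⟩
        rw [hνdef, hμdef] at heq
        push_cast at heq ⊢
        linear_combination heq
      rw [hYz, LinearMap.zero_apply, hα0]
    have hzero : ∀ (x : ℂ) (w' : W),
        mulXZ z ((((0 : ℕ) : ℂ)) + (j₁' : ℂ) / (T : ℂ)) (Ydual M.Y u β' w') x = 0 := by
      intro x w'
      rw [VAaux.mulXZ_eq_sum z _ _ _ 0 (fun t _ => hβz (M.Y u _ w'))]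
      simp
    exact ⟨0, fun x _ w' => hzero _ w', ⟨0, fun mm _ w' => hzero _ w'⟩⟩
  case pos =>
    obtain ⟨m₀, hmeq⟩ := hm
    obtain ⟨Nt, hNt⟩ := A.trunc u v
    set K₀ : ℕ := Nt.toNat with hK₀def
    have hK : ∀ ι : ℕ, K₀ ≤ ι → A.Y u ((ι : ℤ)) v = 0 := by
      intro ι hι
      apply hNt
      calc Nt ≤ (Nt.toNat : ℤ) := Int.self_le_toNat Nt
        _ ≤ (ι : ℤ) := by exact_mod_cast hι
    obtain ⟨k₁, hk₁⟩ := hD j₁' j₂' u hu₁ hu₂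
    obtain ⟨N₁, hN₁⟩ := hk₁.2
    have hprod : ∀ ι : ℕ, ∃ k : ℕ, DCond T z (j₁ + j₁') (j₂ + j₂') M.Y (A.Y u (ι : ℤ) v) α k :=
      fun ι => hD (j₁ + j₁') (j₂ + j₂') _ (VAaux.eig_prod j₁ j₁' u v hu₁ hv₁ (ι : ℤ))
        (VAaux.eig_prod j₂ j₂' u v hu₂ hv₂ (ι : ℤ))
    choose kp hkp using hprod
    have hNp' : ∀ ι : ℕ, ∃ N : ℤ, ∀ mm : ℤ, N ≤ mm → ∀ w : W,
        mulXZ z ((kp ι : ℂ) + ((j₁ + j₁' : ℤ) : ℂ) / (T : ℂ))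
          (Ydual M.Y (A.Y u (ι : ℤ) v) α w) ((mm : ℂ) + ((j₂ + j₂' : ℤ) : ℂ) / (T : ℂ)) = 0 :=
      fun ι => (hkp ι).2
    choose Np hNp using hNp'
    set kmax : ℕ := (Finset.range K₀).sup kp with hkmax
    set k' : ℕ := k₁ + K₀ + m₀.natAbs + kmax with hk'def
    -- upshifted DCond for u
    have hDu : ∀ mm : ℤ, N₁ ≤ mm → ∀ w : W,
        mulXZ z ((k' : ℂ) + (j₁' : ℂ) / (T : ℂ)) (Ydual M.Y u α w)
          ((mm : ℂ) + (j₂' : ℂ) / (T : ℂ)) = 0 := by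
      have hup := VAaux.upshift z ((k₁ : ℂ) + (j₁' : ℂ) / (T : ℂ)) ((j₂' : ℂ) / (T : ℂ))
        (fun w => Ydual M.Y u α w) (fun w C => hLT u w C) N₁ hN₁ (K₀ + m₀.natAbs + kmax)
      intro mm hmm w
      have hexp : ((k₁ : ℂ) + (j₁' : ℂ) / (T : ℂ)) + ((K₀ + m₀.natAbs + kmax : ℕ) : ℂ)
          = (k' : ℂ) + (j₁' : ℂ) / (T : ℂ) := by
        rw [hk'def]
        push_cast
        ring
      rw [← hexp]
      exact hup mm hmm w
    -- upshifted DCond for the products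
    have hDp : ∀ ι a : ℕ, ι < K₀ → a ≤ ι → ∀ mm : ℤ, Np ι ≤ mm → ∀ w : W,
        mulXZ z (((k' : ℂ) + (j₁' : ℂ) / (T : ℂ)) + μ' - (a : ℂ))
          (Ydual M.Y (A.Y u (ι : ℤ) v) α w)
          ((mm : ℂ) + ((j₂ + j₂' : ℤ) : ℂ) / (T : ℂ)) = 0 := by
      intro ι a hι ha mm hmm w
      have hkpmax : kp ι ≤ kmax := by
        rw [hkmax]
        exact Finset.le_sup (Finset.mem_range.mpr hι)
      have hnn : (0 : ℤ) ≤ (k' : ℤ) + m₀ - a - kp ι := by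
        have hk'' : (k' : ℤ) = (k₁ : ℤ) + K₀ + m₀.natAbs + kmax := by
          rw [hk'def]; push_cast; ring
        omega
      have hup := VAaux.upshift z ((kp ι : ℂ) + ((j₁ + j₁' : ℤ) : ℂ) / (T : ℂ))
        (((j₂ + j₂' : ℤ) : ℂ) / (T : ℂ)) (fun w => Ydual M.Y (A.Y u (ι : ℤ) v) α w)
        (fun w C => hLT _ w C) (Np ι) (hNp ι) (((k' : ℤ) + m₀ - a - kp ι).toNat) mm hmm w
      have h2 : ((((k' : ℤ) + m₀ - a - kp ι).toNat : ℕ) : ℂ)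
          = (k' : ℂ) + (m₀ : ℂ) - (a : ℂ) - (kp ι : ℂ) := by
        calc ((((k' : ℤ) + m₀ - a - kp ι).toNat : ℕ) : ℂ)
            = (((((k' : ℤ) + m₀ - a - kp ι).toNat : ℕ) : ℤ) : ℂ) := by push_cast; ring
          _ = (((k' : ℤ) + m₀ - a - kp ι : ℤ) : ℂ) := by rw [Int.toNat_of_nonneg hnn]
          _ = (k' : ℂ) + (m₀ : ℂ) - (a : ℂ) - (kp ι : ℂ) := by push_cast; ring
      have hexp : ((kp ι : ℂ) + ((j₁ + j₁' : ℤ) : ℂ) / (T : ℂ))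
          + ((((k' : ℤ) + m₀ - a - kp ι).toNat : ℕ) : ℂ)
          = ((k' : ℂ) + (j₁' : ℂ) / (T : ℂ)) + μ' - (a : ℂ) := by
        rw [h2, hμdef, hmeq]
        push_cast
        ring
      rw [← hexp]
      exact hup
    set NL : ℤ := max N₁ (((Finset.range K₀).sup fun ι => (Np ι + ι - n).toNat : ℕ) : ℤ)
      with hNLdef
    refine ⟨k', ?_, ⟨NL, ?_⟩⟩
    · -- exponents supported on integers
      intro nn hnn w'
      rw [VAaux.mulXZ_eq_sum z _ _ _ 0 ?_]
      · simp
      intro t _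
      show β' (M.Y u (nn + (j₂' : ℂ) / (T : ℂ) + ((k' : ℂ) + (j₁' : ℂ) / (T : ℂ)) - t) w') = 0
      have hYz : M.Y u (nn + (j₂' : ℂ) / (T : ℂ) + ((k' : ℂ) + (j₁' : ℂ) / (T : ℂ)) - t) = 0 := by
        apply VAaux.sl hT M (-(j₁' + j₂')) u huσ
        intro mh heq
        apply hnn (mh - k' + t)
        push_cast at heq ⊢
        linear_combination heq
      rw [hYz, LinearMap.zero_apply, hβ'0]
    · -- lower truncation
      intro MM hMM w'
      rw [hNLdef] at hMM
      have hMM1 : N₁ ≤ MM := le_trans (le_max_left _ _) hMM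
      obtain ⟨B₀, hB₀⟩ := VAaux.ltruncY hT M u w' ((MM : ℂ) + (j₂' : ℂ) / (T : ℂ) + ((k' : ℂ) + (j₁' : ℂ) / (T : ℂ)))
      choose R hR using fun t : ℕ => hLT v (M.Y u (((MM : ℂ) + (j₂' : ℂ) / (T : ℂ) + ((k' : ℂ) + (j₁' : ℂ) / (T : ℂ))) - (t : ℂ)) w') (ν' + μ')
      choose BH hBH using fun ι : ℕ =>
        hLT (A.Y u (ι : ℤ) v) w' (((MM : ℂ) + (j₂' : ℂ) / (T : ℂ) + ((k' : ℂ) + (j₁' : ℂ) / (T : ℂ))) + (ν' + μ') - (ι : ℂ))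
      choose BG hBG using fun r : ℕ =>
        VAaux.ltruncY hT M u (M.Y v (ν' + μ' - (r : ℂ)) w') ((MM : ℂ) + (j₂' : ℂ) / (T : ℂ) + ((k' : ℂ) + (j₁' : ℂ) / (T : ℂ)))
      set Br : ℕ := max ((Finset.range B₀).sup R) ((Finset.range K₀).sup BH) with hBrdef
      set Bt : ℕ := max (max B₀ ((Finset.range Br).sup BG))
        ((Finset.range K₀).sup BH + K₀) with hBtdef
      have hB₀Bt : B₀ ≤ Bt := by
        rw [hBtdef]; exact le_trans (le_max_left _ _) (le_max_left _ _)
      have hsupBHBt : (Finset.range K₀).sup BH + K₀ ≤ Bt := by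
        rw [hBtdef]; exact le_max_right _ _
      have hsupBHBr : (Finset.range K₀).sup BH ≤ Br := by
        rw [hBrdef]; exact le_max_right _ _
      have hsupRBr : (Finset.range B₀).sup R ≤ Br := by
        rw [hBrdef]; exact le_max_left _ _
      have hsupBGBt : (Finset.range Br).sup BG ≤ Bt := by
        rw [hBtdef]; exact le_trans (le_max_right _ _) (le_max_left _ _)
      have hfS : ∀ t : ℕ, Bt ≤ t → Ydual M.Y u β' w' (((MM : ℂ) + (j₂' : ℂ) / (T : ℂ) + ((k' : ℂ) + (j₁' : ℂ) / (T : ℂ))) - (t : ℂ)) = 0 := by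
        intro t ht
        show β' (M.Y u (((MM : ℂ) + (j₂' : ℂ) / (T : ℂ) + ((k' : ℂ) + (j₁' : ℂ) / (T : ℂ))) - (t : ℂ)) w') = 0
        rw [hB₀ t (by omega), hβ'0]
      rw [VAaux.mulXZ_eq_sum z ((k' : ℂ) + (j₁' : ℂ) / (T : ℂ)) ((MM : ℂ) + (j₂' : ℂ) / (T : ℂ))
        (Ydual M.Y u β' w') Bt hfS]
      have hexp2 : ∀ t : ℕ, β' (M.Y u (((MM : ℂ) + (j₂' : ℂ) / (T : ℂ) + ((k' : ℂ) + (j₁' : ℂ) / (T : ℂ))) - (t : ℂ)) w')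
          = ∑ r ∈ Finset.range Br, cbinom μ' r * (-z) ^ r *
              α (M.Y v (ν' + μ' - (r : ℂ)) (M.Y u (((MM : ℂ) + (j₂' : ℂ) / (T : ℂ) + ((k' : ℂ) + (j₁' : ℂ) / (T : ℂ))) - (t : ℂ)) w')) := by
        intro t
        by_cases ht : t < B₀
        · rw [hβ'w]
          rw [VAaux.mulXZ_eq_sum z μ' ν' _ Br (fun ρ hρ => hR t ρ (by
            have h1 : R t ≤ (Finset.range B₀).sup R := Finset.le_sup (Finset.mem_range.mpr ht)
            omega))]
          exact Finset.sum_congr rfl fun r _ => rfl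
        · have hz1 : M.Y u (((MM : ℂ) + (j₂' : ℂ) / (T : ℂ) + ((k' : ℂ) + (j₁' : ℂ) / (T : ℂ))) - (t : ℂ)) w' = 0 := hB₀ t (by omega)
          rw [hz1, hβ'0]
          symm
          refine Finset.sum_eq_zero fun r _ => ?_
          rw [map_zero, hα0, mul_zero]
      have hcomm : ∀ t r : ℕ,
          α (M.Y v (ν' + μ' - (r : ℂ)) (M.Y u (((MM : ℂ) + (j₂' : ℂ) / (T : ℂ) + ((k' : ℂ) + (j₁' : ℂ) / (T : ℂ))) - (t : ℂ)) w'))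
            = α (M.Y u (((MM : ℂ) + (j₂' : ℂ) / (T : ℂ) + ((k' : ℂ) + (j₁' : ℂ) / (T : ℂ))) - (t : ℂ)) (M.Y v (ν' + μ' - (r : ℂ)) w'))
              + ∑ ι ∈ Finset.range K₀, cbinom (((MM : ℂ) + (j₂' : ℂ) / (T : ℂ) + ((k' : ℂ) + (j₁' : ℂ) / (T : ℂ))) - (t : ℂ)) ι *
                  α (M.Y (A.Y u (ι : ℤ) v)
                    ((((MM : ℂ) + (j₂' : ℂ) / (T : ℂ) + ((k' : ℂ) + (j₁' : ℂ) / (T : ℂ))) - (t : ℂ)) + (ν' + μ' - (r : ℂ)) - (ι : ℂ)) w') := by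
        intro t r
        have hb : ((j₁' + j₂' + (T : ℤ) * (MM + k' - t) : ℤ) : ℂ) / (T : ℂ)
            = ((MM : ℂ) + (j₂' : ℂ) / (T : ℂ) + ((k' : ℂ) + (j₁' : ℂ) / (T : ℂ))) - (t : ℂ) := by
          push_cast
          field_simp
          ring
        have hc : ((j₁ + j₂ + (T : ℤ) * (m₀ + n - r) : ℤ) : ℂ) / (T : ℂ)
            = ν' + μ' - (r : ℂ) := by
          rw [hνdef, hμdef, hmeq]
          push_cast
          field_simp
          ring
        have hdvd : (T : ℤ) ∣ (j₁' + j₂' + (T : ℤ) * (MM + k' - t)) + (-(j₁' + j₂')) :=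
          ⟨MM + k' - t, by ring⟩
        have hcf := VAaux.comm_formula hT M (-(j₁' + j₂')) u huσ v K₀ hK
          (j₁' + j₂' + (T : ℤ) * (MM + k' - t)) (j₁ + j₂ + (T : ℤ) * (m₀ + n - r)) hdvd w'
        rw [hb, hc] at hcf
        rw [hcf, hlin.map_add]
        congr 1
        have hmap := map_sum (IsLinearMap.mk' α hlin)
          (fun ι => cbinom (((MM : ℂ) + (j₂' : ℂ) / (T : ℂ) + ((k' : ℂ) + (j₁' : ℂ) / (T : ℂ))) - (t : ℂ)) ι •
            M.Y (A.Y u (ι : ℤ) v) ((((MM : ℂ) + (j₂' : ℂ) / (T : ℂ) + ((k' : ℂ) + (j₁' : ℂ) / (T : ℂ))) - (t : ℂ)) + (ν' + μ' - (r : ℂ)) - (ι : ℂ)) w')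
          (Finset.range K₀)
        simp only [IsLinearMap.mk'_apply] at hmap
        rw [hmap]
        exact Finset.sum_congr rfl fun ι _ => by rw [hlin.map_smul, smul_eq_mul]
      have hstep : ∀ t ∈ Finset.range Bt,
          cbinom ((k' : ℂ) + (j₁' : ℂ) / (T : ℂ)) t * (-z) ^ t * Ydual M.Y u β' w' (((MM : ℂ) + (j₂' : ℂ) / (T : ℂ) + ((k' : ℂ) + (j₁' : ℂ) / (T : ℂ))) - (t : ℂ))
          = (∑ r ∈ Finset.range Br, (cbinom ((k' : ℂ) + (j₁' : ℂ) / (T : ℂ)) t * (-z) ^ t) *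
                ((cbinom μ' r * (-z) ^ r) *
                  α (M.Y u (((MM : ℂ) + (j₂' : ℂ) / (T : ℂ) + ((k' : ℂ) + (j₁' : ℂ) / (T : ℂ))) - (t : ℂ)) (M.Y v (ν' + μ' - (r : ℂ)) w'))))
            + ∑ r ∈ Finset.range Br, ∑ ι ∈ Finset.range K₀,
                (cbinom ((k' : ℂ) + (j₁' : ℂ) / (T : ℂ)) t * (-z) ^ t) *
                  ((cbinom μ' r * (-z) ^ r) * (cbinom (((MM : ℂ) + (j₂' : ℂ) / (T : ℂ) + ((k' : ℂ) + (j₁' : ℂ) / (T : ℂ))) - (t : ℂ)) ι *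
                    α (M.Y (A.Y u (ι : ℤ) v)
                      ((((MM : ℂ) + (j₂' : ℂ) / (T : ℂ) + ((k' : ℂ) + (j₁' : ℂ) / (T : ℂ))) - (t : ℂ)) + (ν' + μ' - (r : ℂ)) - (ι : ℂ)) w'))) := by
        intro t _
        have h1 : Ydual M.Y u β' w' (((MM : ℂ) + (j₂' : ℂ) / (T : ℂ) + ((k' : ℂ) + (j₁' : ℂ) / (T : ℂ))) - (t : ℂ)) = β' (M.Y u (((MM : ℂ) + (j₂' : ℂ) / (T : ℂ) + ((k' : ℂ) + (j₁' : ℂ) / (T : ℂ))) - (t : ℂ)) w') := rfl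
        rw [h1, hexp2 t, Finset.mul_sum, ← Finset.sum_add_distrib]
        refine Finset.sum_congr rfl fun r _ => ?_
        rw [hcomm t r, mul_add, mul_add, Finset.mul_sum, Finset.mul_sum]
      rw [Finset.sum_congr rfl hstep, Finset.sum_add_distrib]
      have hG : ∑ t ∈ Finset.range Bt, ∑ r ∈ Finset.range Br,
          (cbinom ((k' : ℂ) + (j₁' : ℂ) / (T : ℂ)) t * (-z) ^ t) *
            ((cbinom μ' r * (-z) ^ r) *
              α (M.Y u (((MM : ℂ) + (j₂' : ℂ) / (T : ℂ) + ((k' : ℂ) + (j₁' : ℂ) / (T : ℂ))) - (t : ℂ)) (M.Y v (ν' + μ' - (r : ℂ)) w'))) = 0 := by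
        rw [Finset.sum_comm]
        refine Finset.sum_eq_zero fun r hr => ?_
        have hBGr : BG r ≤ Bt := by
          have h1 : BG r ≤ (Finset.range Br).sup BG := Finset.le_sup hr
          omega
        have hmz := VAaux.mulXZ_eq_sum z ((k' : ℂ) + (j₁' : ℂ) / (T : ℂ)) ((MM : ℂ) + (j₂' : ℂ) / (T : ℂ))
          (Ydual M.Y u α (M.Y v (ν' + μ' - (r : ℂ)) w')) Bt (fun t ht => by
            show α (M.Y u (((MM : ℂ) + (j₂' : ℂ) / (T : ℂ) + ((k' : ℂ) + (j₁' : ℂ) / (T : ℂ))) - (t : ℂ)) (M.Y v (ν' + μ' - (r : ℂ)) w')) = 0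
            rw [hBG r t (by omega), hα0])
        have h0 := hDu MM hMM1 (M.Y v (ν' + μ' - (r : ℂ)) w')
        rw [hmz] at h0
        calc ∑ t ∈ Finset.range Bt, (cbinom ((k' : ℂ) + (j₁' : ℂ) / (T : ℂ)) t * (-z) ^ t) *
              ((cbinom μ' r * (-z) ^ r) *
                α (M.Y u (((MM : ℂ) + (j₂' : ℂ) / (T : ℂ) + ((k' : ℂ) + (j₁' : ℂ) / (T : ℂ))) - (t : ℂ)) (M.Y v (ν' + μ' - (r : ℂ)) w')))
            = (cbinom μ' r * (-z) ^ r) * ∑ t ∈ Finset.range Bt,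
                cbinom ((k' : ℂ) + (j₁' : ℂ) / (T : ℂ)) t * (-z) ^ t *
                  Ydual M.Y u α (M.Y v (ν' + μ' - (r : ℂ)) w') (((MM : ℂ) + (j₂' : ℂ) / (T : ℂ) + ((k' : ℂ) + (j₁' : ℂ) / (T : ℂ))) - (t : ℂ)) := by
              rw [Finset.mul_sum]
              refine Finset.sum_congr rfl fun t _ => ?_
              show (cbinom ((k' : ℂ) + (j₁' : ℂ) / (T : ℂ)) t * (-z) ^ t) *
                    ((cbinom μ' r * (-z) ^ r) *
                      α (M.Y u (((MM : ℂ) + (j₂' : ℂ) / (T : ℂ) + ((k' : ℂ) + (j₁' : ℂ) / (T : ℂ))) - (t : ℂ)) (M.Y v (ν' + μ' - (r : ℂ)) w')))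
                  = (cbinom μ' r * (-z) ^ r) * (cbinom ((k' : ℂ) + (j₁' : ℂ) / (T : ℂ)) t * (-z) ^ t *
                      α (M.Y u (((MM : ℂ) + (j₂' : ℂ) / (T : ℂ) + ((k' : ℂ) + (j₁' : ℂ) / (T : ℂ))) - (t : ℂ)) (M.Y v (ν' + μ' - (r : ℂ)) w')))
              ring
          _ = 0 := by rw [h0, mul_zero]
      rw [hG, zero_add]
      have hswap : ∑ t ∈ Finset.range Bt, ∑ r ∈ Finset.range Br, ∑ ι ∈ Finset.range K₀,
          (cbinom ((k' : ℂ) + (j₁' : ℂ) / (T : ℂ)) t * (-z) ^ t) *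
            ((cbinom μ' r * (-z) ^ r) * (cbinom (((MM : ℂ) + (j₂' : ℂ) / (T : ℂ) + ((k' : ℂ) + (j₁' : ℂ) / (T : ℂ))) - (t : ℂ)) ι *
              α (M.Y (A.Y u (ι : ℤ) v)
                ((((MM : ℂ) + (j₂' : ℂ) / (T : ℂ) + ((k' : ℂ) + (j₁' : ℂ) / (T : ℂ))) - (t : ℂ)) + (ν' + μ' - (r : ℂ)) - (ι : ℂ)) w')))
          = ∑ ι ∈ Finset.range K₀, ∑ t ∈ Finset.range Bt, ∑ r ∈ Finset.range Br,
              (cbinom ((k' : ℂ) + (j₁' : ℂ) / (T : ℂ)) t * (-z) ^ t) *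
                ((cbinom μ' r * (-z) ^ r) * (cbinom (((MM : ℂ) + (j₂' : ℂ) / (T : ℂ) + ((k' : ℂ) + (j₁' : ℂ) / (T : ℂ))) - (t : ℂ)) ι *
                  α (M.Y (A.Y u (ι : ℤ) v)
                    ((((MM : ℂ) + (j₂' : ℂ) / (T : ℂ) + ((k' : ℂ) + (j₁' : ℂ) / (T : ℂ))) - (t : ℂ)) + (ν' + μ' - (r : ℂ)) - (ι : ℂ)) w'))) := by
        rw [Finset.sum_congr rfl fun t (_ : t ∈ Finset.range Bt) => Finset.sum_comm]
        exact Finset.sum_comm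
      rw [hswap]
      refine Finset.sum_eq_zero fun ι hι => ?_
      have hι' : ι < K₀ := Finset.mem_range.mp hι
      have hBHι : BH ι ≤ (Finset.range K₀).sup BH := Finset.le_sup hι
      have hXi := VAaux.xi_vanish z ((k' : ℂ) + (j₁' : ℂ) / (T : ℂ)) μ' ((MM : ℂ) + (j₂' : ℂ) / (T : ℂ) + ((k' : ℂ) + (j₁' : ℂ) / (T : ℂ))) (ν' + μ') ι
        (Ydual M.Y (A.Y u (ι : ℤ) v) α w') Bt Br (BH ι)
        (fun ρ hρ => hBH ι ρ hρ)
        (by omega) (by omega)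
        (fun a ha => by
          have hpt : (((MM : ℂ) + (j₂' : ℂ) / (T : ℂ) + ((k' : ℂ) + (j₁' : ℂ) / (T : ℂ))) + (ν' + μ') - (ι : ℂ) - (a : ℂ))
              - (((k' : ℂ) + (j₁' : ℂ) / (T : ℂ)) + μ' - (a : ℂ))
              = ((MM + n - ι : ℤ) : ℂ) + ((j₂ + j₂' : ℤ) : ℂ) / (T : ℂ) := by
            rw [hνdef]
            push_cast
            ring
          rw [hpt]
          have hbound : Np ι ≤ MM + n - ι := by
            have hsup : (Np ι + ι - n).toNat ≤ (Finset.range K₀).sup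
                (fun ι => (Np ι + ι - n).toNat) :=
              Finset.le_sup (f := fun ι => (Np ι + (ι : ℤ) - n).toNat) hι
            have h1 : ((Np ι + ι - n).toNat : ℤ)
                ≤ (((Finset.range K₀).sup fun ι => (Np ι + ι - n).toNat : ℕ) : ℤ) := by
              exact_mod_cast hsup
            have h2 : (((Finset.range K₀).sup fun ι => (Np ι + ι - n).toNat : ℕ) : ℤ) ≤ MM :=
              le_trans (le_max_right _ _) hMM
            have h3 : Np ι + ι - n ≤ ((Np ι + ι - n).toNat : ℤ) := Int.self_le_toNat _
            omega
          exact hDp ι a hι' ha (MM + n - ι) hbound w')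
      calc ∑ t ∈ Finset.range Bt, ∑ r ∈ Finset.range Br,
          (cbinom ((k' : ℂ) + (j₁' : ℂ) / (T : ℂ)) t * (-z) ^ t) *
            ((cbinom μ' r * (-z) ^ r) * (cbinom (((MM : ℂ) + (j₂' : ℂ) / (T : ℂ) + ((k' : ℂ) + (j₁' : ℂ) / (T : ℂ))) - (t : ℂ)) ι *
              α (M.Y (A.Y u (ι : ℤ) v)
                ((((MM : ℂ) + (j₂' : ℂ) / (T : ℂ) + ((k' : ℂ) + (j₁' : ℂ) / (T : ℂ))) - (t : ℂ)) + (ν' + μ' - (r : ℂ)) - (ι : ℂ)) w')))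
          = ∑ t ∈ Finset.range Bt, ∑ r ∈ Finset.range Br,
              (cbinom ((k' : ℂ) + (j₁' : ℂ) / (T : ℂ)) t * (-z) ^ t) *
                ((cbinom μ' r * (-z) ^ r) * (cbinom (((MM : ℂ) + (j₂' : ℂ) / (T : ℂ) + ((k' : ℂ) + (j₁' : ℂ) / (T : ℂ))) - (t : ℂ)) ι *
                  Ydual M.Y (A.Y u (ι : ℤ) v) α w'
                    ((((MM : ℂ) + (j₂' : ℂ) / (T : ℂ) + ((k' : ℂ) + (j₁' : ℂ) / (T : ℂ))) - (t : ℂ)) + ((ν' + μ') - (r : ℂ)) - (ι : ℂ)))) :=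
            Finset.sum_congr rfl fun t _ => Finset.sum_congr rfl fun r _ => rfl
        _ = 0 := hXi
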